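/- arXiv:2412.16396 — 5 statements merged into one kernel-verified Lean document; each statement's English description precedes it below -/
import Mathlib

section
/- Power balance and dissipation for port-Hamiltonian LTV systems: if the LTV system is port-Hamiltonian with data Q, J, R, K, G, P, S, N and Hamiltonian H(t,x) = ½ x* Q(t) x, then every state-input-output solution (x,u,y) satisfies, for a.e. t ∈ 𝕋, the power balance equation d/dt H(t,x(t)) = −[Q(t)x(t); u(t)]* W(t) [Q(t)x(t); u(t)] + Re(y(t)* u(t)), where W(t) = [[R(t), P(t)],[P(t)*, S(t)]]; in particular the dissipation inequality d/dt H(t,x(t)) ≤ Re(y(t)* u(t)) holds for a.e. t ∈ 𝕋. -/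
open MeasureTheory Matrix Set
open scoped ENNReal ComplexOrder

noncomputable section

attribute [local instance] Matrix.normedAddCommGroup Matrix.normedSpace

variable {n m : ℕ}

/-- `f` is locally `Lᵖ` on the interval `T`: it is `ℒᵖ` on every compact subinterval. -/
def LocLp {E : Type*} [NormedAddCommGroup E] (T : Set ℝ) (p : ℝ≥0∞) (f : ℝ → E) : Prop :=
  ∀ a ∈ T, ∀ b ∈ T, MemLp f p (volume.restrict (Icc a b))

/-- The coefficient regularity assumptions of an LTV system:
`A ∈ L¹_loc`, `B ∈ L²_loc`, `C ∈ L²_loc`, `D ∈ L^∞_loc`. -/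
def IsLTV (T : Set ℝ) (A : ℝ → Matrix (Fin n) (Fin n) ℂ) (B : ℝ → Matrix (Fin n) (Fin m) ℂ)
    (C : ℝ → Matrix (Fin m) (Fin n) ℂ) (D : ℝ → Matrix (Fin m) (Fin m) ℂ) : Prop :=
  LocLp T 1 A ∧ LocLp T 2 B ∧ LocLp T 2 C ∧ LocLp T ⊤ D

/-- A state-input-output solution of the LTV system on `T` (Carathéodory sense):
`u, y ∈ L²_loc`, `x` is locally absolutely continuous with `ẋ = A x + B u` a.e.
(expressed in integral form), and `y = C x + D u` a.e. on `T`. -/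
def IsSolution (T : Set ℝ) (A : ℝ → Matrix (Fin n) (Fin n) ℂ) (B : ℝ → Matrix (Fin n) (Fin m) ℂ)
    (C : ℝ → Matrix (Fin m) (Fin n) ℂ) (D : ℝ → Matrix (Fin m) (Fin m) ℂ)
    (x : ℝ → Fin n → ℂ) (u y : ℝ → Fin m → ℂ) : Prop :=
  LocLp T 2 u ∧ LocLp T 2 y ∧
  (∀ a ∈ T, ∀ b ∈ T, IntegrableOn (fun r => A r *ᵥ x r + B r *ᵥ u r) (Icc a b)) ∧
  (∀ s ∈ T, ∀ t ∈ T, x t - x s = ∫ r in s..t, (A r *ᵥ x r + B r *ᵥ u r)) ∧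
  (∀ᵐ t ∂(volume : Measure ℝ), t ∈ T → y t = C t *ᵥ x t + D t *ᵥ u t)

/-- Port-Hamiltonian structure for the LTV system `(A,B,C,D)` with Hamiltonian data
`Q` (which is `W^{1,1}_loc` with a.e. derivative `Q'`) and coefficients
`J, R, K, G, P, S, N`. -/
def IsPH (T : Set ℝ) (A : ℝ → Matrix (Fin n) (Fin n) ℂ) (B : ℝ → Matrix (Fin n) (Fin m) ℂ)
    (C : ℝ → Matrix (Fin m) (Fin n) ℂ) (D : ℝ → Matrix (Fin m) (Fin m) ℂ)
    (Q Q' J R K : ℝ → Matrix (Fin n) (Fin n) ℂ)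
    (G P : ℝ → Matrix (Fin n) (Fin m) ℂ) (S N : ℝ → Matrix (Fin m) (Fin m) ℂ) : Prop :=
  (∀ t ∈ T, (Q t).PosSemidef) ∧
  LocLp T 1 Q' ∧
  (∀ s ∈ T, ∀ t ∈ T, Q t - Q s = ∫ r in s..t, Q' r) ∧
  AEStronglyMeasurable J (volume.restrict T) ∧
  AEStronglyMeasurable R (volume.restrict T) ∧
  AEStronglyMeasurable K (volume.restrict T) ∧
  AEStronglyMeasurable G (volume.restrict T) ∧
  AEStronglyMeasurable P (volume.restrict T) ∧
  AEStronglyMeasurable S (volume.restrict T) ∧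
  AEStronglyMeasurable N (volume.restrict T) ∧
  (∀ᵐ t ∂(volume : Measure ℝ), t ∈ T →
    J t = -(J t)ᴴ ∧ N t = -(N t)ᴴ ∧
    Q t * K t + (K t)ᴴ * Q t = Q' t ∧
    (Matrix.fromBlocks (R t) (P t) ((P t)ᴴ) (S t)).PosSemidef ∧
    A t = (J t - R t) * Q t - K t ∧
    B t = G t - P t ∧
    C t = (G t + P t)ᴴ * Q t ∧
    D t = S t - N t)


section AuxPH
open Filter
open scoped Topology ComplexConjugate


lemma ftc_ae {E : Type*} [NormedAddCommGroup E] [NormedSpace ℝ E] [CompleteSpace E]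
    {f F : ℝ → E} {a b : ℝ}
    (hf : IntegrableOn f (Icc a b))
    (hF : ∀ s ∈ Icc a b, ∀ t ∈ Icc a b, F t - F s = ∫ r in s..t, f r) :
    ∀ᵐ t ∂(volume : Measure ℝ), t ∈ Ioo a b → HasDerivAt F (f t) t := by
  set g : ℝ → E := (Icc a b).indicator f with hgdef
  have hg : Integrable g := (integrable_indicator_iff measurableSet_Icc).mpr hf
  have hgl : LocallyIntegrable g volume := hg.locallyIntegrable
  filter_upwards [(IsUnifLocDoublingMeasure.vitaliFamily (volume : Measure ℝ) 1).ae_tendsto_average_norm_sub hgl]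
    with t ht hmem
  have htI : t ∈ Icc a b := Ioo_subset_Icc_self hmem
  have hgt : g t = f t := indicator_of_mem htI f
  have hR : Tendsto (fun s => ⨍ y in Icc t s, ‖g y - g t‖) (𝓝[>] t) (𝓝 0) :=
    ht.comp (Real.tendsto_Icc_vitaliFamily_right t)
  have hL : Tendsto (fun s => ⨍ y in Icc s t, ‖g y - g t‖) (𝓝[<] t) (𝓝 0) :=
    ht.comp (Real.tendsto_Icc_vitaliFamily_left t)
  rw [hasDerivAt_iff_tendsto_slope, ← nhdsLT_sup_nhdsGT, tendsto_sup]
  constructor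
  · -- left
    rw [tendsto_iff_norm_sub_tendsto_zero]
    refine squeeze_zero' (Eventually.of_forall fun s => norm_nonneg _) ?_ hL
    filter_upwards [Ico_mem_nhdsLT_of_mem ⟨hmem.1, le_refl t⟩] with s hs
    have hsa : a ≤ s := hs.1
    have hst : s < t := hs.2
    have hsI : s ∈ Icc a b := ⟨hsa, hst.le.trans htI.2⟩
    have hFt : F t - F s = ∫ r in Ioc s t, f r := by
      rw [hF s hsI t htI, intervalIntegral.integral_of_le hst.le]
    have hvol : volume.real (Icc s t) = t - s := by
      rw [Real.volume_real_Icc_of_le (by linarith)]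
    have hcongr : ∫ y in Icc s t, ‖g y - g t‖ = ∫ y in Ioc s t, ‖f y - f t‖ := by
      rw [integral_Icc_eq_integral_Ioc]
      refine setIntegral_congr_fun measurableSet_Ioc fun y hy => ?_
      have : y ∈ Icc a b := ⟨hsa.trans hy.1.le, hy.2.trans htI.2⟩
      rw [hgdef, indicator_of_mem this, indicator_of_mem htI]
    have key : ‖slope F t s - f t‖ ≤ ⨍ y in Icc s t, ‖g y - g t‖ := by
      rw [slope_comm, slope_def_module, setAverage_eq, hvol, hcongr]
      have : F t - F s - (t - s) • f t = ∫ y in Ioc s t, (f y - f t) := by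
        rw [hFt, integral_sub (hf.mono_set (Ioc_subset_Icc_self.trans (Icc_subset_Icc hsa htI.2)))
          (integrableOn_const (by rw [Real.volume_Ioc]; exact ENNReal.ofReal_ne_top)),
          setIntegral_const, Real.volume_real_Ioc_of_le (by linarith)]
      calc ‖(t - s)⁻¹ • (F t - F s) - f t‖
          = ‖(t - s)⁻¹ • (F t - F s - (t - s) • f t)‖ := by
            congr 1
            rw [smul_sub ((t - s)⁻¹) (F t - F s) ((t - s) • f t), smul_smul,
              inv_mul_cancel₀ (sub_ne_zero.mpr hst.ne'), one_smul,
              smul_sub ((t - s)⁻¹) (F t) (F s)]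
        _ = (t - s)⁻¹ * ‖∫ y in Ioc s t, (f y - f t)‖ := by
            rw [this, norm_smul, Real.norm_eq_abs, abs_of_pos (inv_pos.mpr (by linarith))]
        _ ≤ (t - s)⁻¹ * ∫ y in Ioc s t, ‖f y - f t‖ :=
            mul_le_mul_of_nonneg_left (norm_integral_le_integral_norm _)
              (inv_nonneg.mpr (by linarith))
        _ = (t - s)⁻¹ • ∫ y in Ioc s t, ‖f y - f t‖ := rfl
    exact key
  · -- right
    rw [tendsto_iff_norm_sub_tendsto_zero]
    refine squeeze_zero' (Eventually.of_forall fun s => norm_nonneg _) ?_ hR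
    filter_upwards [Ioc_mem_nhdsGT_of_mem ⟨le_refl t, hmem.2⟩] with s hs
    have hts : t < s := hs.1
    have hsI : s ∈ Icc a b := ⟨htI.1.trans hts.le, hs.2⟩
    have hFt : F s - F t = ∫ r in Ioc t s, f r := by
      rw [hF t htI s hsI, intervalIntegral.integral_of_le hts.le]
    have hvol : volume.real (Icc t s) = s - t := by
      rw [Real.volume_real_Icc_of_le (by linarith)]
    have hcongr : ∫ y in Icc t s, ‖g y - g t‖ = ∫ y in Ioc t s, ‖f y - f t‖ := by
      rw [integral_Icc_eq_integral_Ioc]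
      refine setIntegral_congr_fun measurableSet_Ioc fun y hy => ?_
      have : y ∈ Icc a b := ⟨htI.1.trans hy.1.le, hy.2.trans hsI.2⟩
      rw [hgdef, indicator_of_mem this, indicator_of_mem htI]
    have key : ‖slope F t s - f t‖ ≤ ⨍ y in Icc t s, ‖g y - g t‖ := by
      rw [slope_def_module, setAverage_eq, hvol, hcongr]
      have : F s - F t - (s - t) • f t = ∫ y in Ioc t s, (f y - f t) := by
        rw [hFt, integral_sub (hf.mono_set (Ioc_subset_Icc_self.trans (Icc_subset_Icc htI.1 hsI.2)))
          (integrableOn_const (by rw [Real.volume_Ioc]; exact ENNReal.ofReal_ne_top)),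
          setIntegral_const, Real.volume_real_Ioc_of_le (by linarith)]
      calc ‖(s - t)⁻¹ • (F s - F t) - f t‖
          = ‖(s - t)⁻¹ • (F s - F t - (s - t) • f t)‖ := by
            congr 1
            rw [smul_sub ((s - t)⁻¹) (F s - F t) ((s - t) • f t), smul_smul,
              inv_mul_cancel₀ (sub_ne_zero.mpr hts.ne'), one_smul,
              smul_sub ((s - t)⁻¹) (F s) (F t)]
        _ = (s - t)⁻¹ * ‖∫ y in Ioc t s, (f y - f t)‖ := by
            rw [this, norm_smul, Real.norm_eq_abs, abs_of_pos (inv_pos.mpr (by linarith))]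
        _ ≤ (s - t)⁻¹ * ∫ y in Ioc t s, ‖f y - f t‖ :=
            mul_le_mul_of_nonneg_left (norm_integral_le_integral_norm _)
              (inv_nonneg.mpr (by linarith))
        _ = (s - t)⁻¹ • ∫ y in Ioc t s, ‖f y - f t‖ := rfl
    exact key

lemma ae_of_ae_Ioo {T : Set ℝ} (hT : IsOpen T) {P : ℝ → Prop}
    (h : ∀ a ∈ T, ∀ b ∈ T, ∀ᵐ t ∂(volume : Measure ℝ), t ∈ Ioo a b → P t) :
    ∀ᵐ t ∂(volume : Measure ℝ), t ∈ T → P t := by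
  rw [ae_iff]
  refine measure_mono_null (?_ :
    {t | ¬(t ∈ T → P t)} ⊆ ⋃ (p : ℚ) (q : ℚ) (_ : (p:ℝ) ∈ T) (_ : (q:ℝ) ∈ T),
      {t | t ∈ Ioo (p:ℝ) (q:ℝ) ∧ ¬ P t}) ?_
  · intro t ht
    rw [Set.mem_setOf_eq, _root_.not_imp] at ht
    obtain ⟨htT, hnP⟩ := ht
    obtain ⟨ε, hε, hball⟩ := Metric.isOpen_iff.mp hT t htT
    rw [Real.ball_eq_Ioo] at hball
    obtain ⟨p, hp1, hp2⟩ := exists_rat_btwn (show t - ε < t by linarith)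
    obtain ⟨q, hq1, hq2⟩ := exists_rat_btwn (show t < t + ε by linarith)
    have hpT : (p:ℝ) ∈ T := hball ⟨hp1, by linarith⟩
    have hqT : (q:ℝ) ∈ T := hball ⟨by linarith, hq2⟩
    exact mem_iUnion.mpr ⟨p, mem_iUnion.mpr ⟨q, mem_iUnion.mpr ⟨hpT, mem_iUnion.mpr
      ⟨hqT, ⟨⟨hp2, hq1⟩, hnP⟩⟩⟩⟩⟩
  · refine measure_iUnion_null fun p => measure_iUnion_null fun q =>
      measure_iUnion_null fun hp => measure_iUnion_null fun hq => ?_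
    have := h p hp q hq
    rw [ae_iff] at this
    convert this using 2
    ext t
    simp only [Set.mem_setOf_eq, _root_.not_imp]

lemma ae_hasDerivAt_loc {E : Type*} [NormedAddCommGroup E] [NormedSpace ℝ E] [CompleteSpace E]
    {T : Set ℝ} (hT : IsOpen T) (hTc : T.OrdConnected) {f F : ℝ → E}
    (hf : ∀ a ∈ T, ∀ b ∈ T, IntegrableOn f (Icc a b))
    (hF : ∀ s ∈ T, ∀ t ∈ T, F t - F s = ∫ r in s..t, f r) :
    ∀ᵐ t ∂(volume : Measure ℝ), t ∈ T → HasDerivAt F (f t) t := by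
  refine ae_of_ae_Ioo hT fun a ha b hb => ftc_ae (hf a ha b hb) fun s hs t ht =>
    hF s (hTc.out ha hb hs) t (hTc.out ha hb ht)

lemma dot_conj {k l : ℕ} (M : Matrix (Fin k) (Fin l) ℂ) (a : Fin k → ℂ) (b : Fin l → ℂ) :
    conj (star a ⬝ᵥ (M *ᵥ b)) = star b ⬝ᵥ (Mᴴ *ᵥ a) := by
  simp only [dotProduct, mulVec, Matrix.conjTranspose_apply, map_sum, _root_.map_mul,
    Pi.star_apply, starRingEnd_apply, star_star, Finset.mul_sum]
  rw [Finset.sum_comm]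
  exact Finset.sum_congr rfl fun j _ => Finset.sum_congr rfl fun i _ => by ring

lemma re_skew {k : ℕ} (M : Matrix (Fin k) (Fin k) ℂ) (v : Fin k → ℂ) (hM : M = -Mᴴ) :
    (star v ⬝ᵥ (M *ᵥ v)).re = 0 := by
  have hM' : Mᴴ = -M := by conv_lhs => rw [hM, Matrix.conjTranspose_neg, Matrix.conjTranspose_conjTranspose]
  have h : conj (star v ⬝ᵥ (M *ᵥ v)) = -(star v ⬝ᵥ (M *ᵥ v)) := by
    rw [dot_conj, hM', Matrix.neg_mulVec, dotProduct_neg]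
  have := congrArg Complex.re h
  simp only [Complex.conj_re, Complex.neg_re] at this
  linarith

lemma star_sum_elim {k l : ℕ} (a : Fin k → ℂ) (b : Fin l → ℂ) :
    star (Sum.elim a b) = Sum.elim (star a) (star b) := by
  funext i; cases i <;> rfl

lemma algebra_key {n m : ℕ}
    (Q Qd J R K : Matrix (Fin n) (Fin n) ℂ) (G P : Matrix (Fin n) (Fin m) ℂ)
    (S N : Matrix (Fin m) (Fin m) ℂ) (xv : Fin n → ℂ) (uv yv : Fin m → ℂ)
    (hQ : Qᴴ = Q) (hJ : J = -Jᴴ) (hN : N = -Nᴴ)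
    (hK : Q * K + Kᴴ * Q = Qd)
    (hy : yv = ((G + P)ᴴ * Q) *ᵥ xv + (S - N) *ᵥ uv) :
    (1/2 : ℝ) * (star (((J - R) * Q - K) *ᵥ xv + (G - P) *ᵥ uv) ⬝ᵥ (Q *ᵥ xv)
      + star xv ⬝ᵥ (Qd *ᵥ xv)
      + star xv ⬝ᵥ (Q *ᵥ (((J - R) * Q - K) *ᵥ xv + (G - P) *ᵥ uv))).re
    = -(star (Sum.elim (Q *ᵥ xv) uv) ⬝ᵥ
        (fromBlocks R P Pᴴ S *ᵥ Sum.elim (Q *ᵥ xv) uv)).re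
      + (star yv ⬝ᵥ uv).re := by
  set z := Q *ᵥ xv with hz
  set xd := ((J - R) * Q - K) *ᵥ xv + (G - P) *ᵥ uv with hxd
  have hQdot : ∀ w : Fin n → ℂ, star xv ⬝ᵥ (Q *ᵥ w) = star z ⬝ᵥ w := by
    intro w
    rw [dotProduct_mulVec, hz, star_mulVec, hQ]
  have hNh : Nᴴ = -N := by conv_lhs => rw [hN, Matrix.conjTranspose_neg, Matrix.conjTranspose_conjTranspose]
  have hxd' : xd = J *ᵥ z - R *ᵥ z - K *ᵥ xv + (G *ᵥ uv - P *ᵥ uv) := by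
    rw [hxd, hz]
    rw [Matrix.sub_mulVec, Matrix.sub_mulVec, ← Matrix.mulVec_mulVec, Matrix.sub_mulVec]
  have h3 : star xv ⬝ᵥ (Q *ᵥ xd)
      = star z ⬝ᵥ (J *ᵥ z) - star z ⬝ᵥ (R *ᵥ z) - star z ⬝ᵥ (K *ᵥ xv)
        + (star z ⬝ᵥ (G *ᵥ uv) - star z ⬝ᵥ (P *ᵥ uv)) := by
    rw [hQdot, hxd']
    simp [dotProduct_add, dotProduct_sub]
  have h1 : star xd ⬝ᵥ z = conj (star xv ⬝ᵥ (Q *ᵥ xd)) := by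
    rw [dot_conj, hQ, ← hz]
  have h2 : star xv ⬝ᵥ (Qd *ᵥ xv) = star z ⬝ᵥ (K *ᵥ xv) + conj (star z ⬝ᵥ (K *ᵥ xv)) := by
    rw [← hK, Matrix.add_mulVec, dotProduct_add, ← Matrix.mulVec_mulVec, hQdot,
      ← Matrix.mulVec_mulVec, dot_conj]
  have hw : star (Sum.elim z uv) ⬝ᵥ (fromBlocks R P Pᴴ S *ᵥ Sum.elim z uv)
      = (star z ⬝ᵥ (R *ᵥ z) + star z ⬝ᵥ (P *ᵥ uv))
        + (conj (star z ⬝ᵥ (P *ᵥ uv)) + star uv ⬝ᵥ (S *ᵥ uv)) := by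
    rw [fromBlocks_mulVec, star_sum_elim, sumElim_dotProduct_sumElim,
      dotProduct_add, dotProduct_add, dot_conj]
    simp [Sum.elim_comp_inl, Sum.elim_comp_inr]
  have hA : star ((((G + P)ᴴ * Q)) *ᵥ xv) ⬝ᵥ uv
      = star z ⬝ᵥ (G *ᵥ uv) + star z ⬝ᵥ (P *ᵥ uv) := by
    rw [star_mulVec, ← dotProduct_mulVec, Matrix.conjTranspose_mul,
      Matrix.conjTranspose_conjTranspose, hQ, ← Matrix.mulVec_mulVec, hQdot,
      Matrix.add_mulVec, dotProduct_add]
  have hB : star ((S - N) *ᵥ uv) ⬝ᵥ uv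
      = conj (star uv ⬝ᵥ (S *ᵥ uv)) + star uv ⬝ᵥ (N *ᵥ uv) := by
    rw [star_mulVec, ← dotProduct_mulVec, Matrix.conjTranspose_sub, Matrix.sub_mulVec,
      dotProduct_sub, dot_conj, hNh, Matrix.neg_mulVec, dotProduct_neg, sub_neg_eq_add]
  have hyterm : star yv ⬝ᵥ uv
      = (star z ⬝ᵥ (G *ᵥ uv) + star z ⬝ᵥ (P *ᵥ uv))
        + (conj (star uv ⬝ᵥ (S *ᵥ uv)) + star uv ⬝ᵥ (N *ᵥ uv)) := by
    rw [hy, star_add, add_dotProduct, hA, hB]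
  have hJre : (star z ⬝ᵥ (J *ᵥ z)).re = 0 := re_skew J z hJ
  have hNre : (star uv ⬝ᵥ (N *ᵥ uv)).re = 0 := re_skew N uv hN
  rw [h1, h2, h3, hw, hyterm]
  simp only [Complex.add_re, Complex.sub_re, Complex.conj_re, Complex.neg_re]
  linarith [hJre, hNre]



lemma entry_hasDerivAt {Q : ℝ → Matrix (Fin n) (Fin n) ℂ} {Qd : Matrix (Fin n) (Fin n) ℂ}
    {t : ℝ} (hQ : HasDerivAt Q Qd t) (i j : Fin n) :
    HasDerivAt (fun s => Q s i j) (Qd i j) t := by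
  let L : Matrix (Fin n) (Fin n) ℂ →ₗ[ℝ] ℂ :=
    { toFun := fun M => M i j
      map_add' := fun M N => rfl
      map_smul' := fun c M => rfl }
  have : HasDerivAt (fun s => L.toContinuousLinearMap (Q s)) (L.toContinuousLinearMap Qd) t :=
    (L.toContinuousLinearMap.hasFDerivAt.comp_hasDerivAt t hQ)
  exact this

lemma quad_hasDerivAt {x : ℝ → Fin n → ℂ} {Q : ℝ → Matrix (Fin n) (Fin n) ℂ}
    {xd : Fin n → ℂ} {Qd : Matrix (Fin n) (Fin n) ℂ} {t : ℝ}
    (hx : HasDerivAt x xd t) (hQ : HasDerivAt Q Qd t) :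
    HasDerivAt (fun s => (1 / 2 : ℝ) * (star (x s) ⬝ᵥ (Q s *ᵥ x s)).re)
      ((1 / 2 : ℝ) * (star xd ⬝ᵥ (Q t *ᵥ x t) + star (x t) ⬝ᵥ (Qd *ᵥ x t)
        + star (x t) ⬝ᵥ (Q t *ᵥ xd)).re) t := by
  have hxi : ∀ i, HasDerivAt (fun s => x s i) (xd i) t := hasDerivAt_pi.mp hx
  have hconj : ∀ i, HasDerivAt (fun s => conj (x s i)) (conj (xd i)) t := fun i =>
    (Complex.conjCLE.toContinuousLinearMap.hasFDerivAt.comp_hasDerivAt t (hxi i))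
  have hinner : ∀ i, HasDerivAt (fun s => ∑ j, Q s i j * x s j)
      (∑ j, (Qd i j * x t j + Q t i j * xd j)) t := fun i =>
    HasDerivAt.fun_sum fun j _ => (entry_hasDerivAt hQ i j).mul (hxi j)
  have hg : HasDerivAt (fun s => ∑ i, conj (x s i) * ∑ j, Q s i j * x s j)
      (∑ i, (conj (xd i) * ∑ j, Q t i j * x t j
        + conj (x t i) * ∑ j, (Qd i j * x t j + Q t i j * xd j))) t :=
    HasDerivAt.fun_sum fun i _ => (hconj i).mul (hinner i)
  have hre : HasDerivAt (fun s => (1 / 2 : ℝ) *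
      Complex.reCLM (∑ i, conj (x s i) * ∑ j, Q s i j * x s j))
      ((1 / 2 : ℝ) * Complex.reCLM (∑ i, (conj (xd i) * ∑ j, Q t i j * x t j
        + conj (x t i) * ∑ j, (Qd i j * x t j + Q t i j * xd j)))) t :=
    (Complex.reCLM.hasFDerivAt.comp_hasDerivAt t hg).const_mul _
  have heq1 : ∀ (v : Fin n → ℂ) (M : Matrix (Fin n) (Fin n) ℂ) (w : Fin n → ℂ),
      star v ⬝ᵥ (M *ᵥ w) = ∑ i, conj (v i) * ∑ j, M i j * w j := by
    intro v M w
    simp only [dotProduct, mulVec, Pi.star_apply, starRingEnd_apply]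
  have heq2 : (∑ i, (conj (xd i) * ∑ j, Q t i j * x t j
        + conj (x t i) * ∑ j, (Qd i j * x t j + Q t i j * xd j)))
      = star xd ⬝ᵥ (Q t *ᵥ x t) + star (x t) ⬝ᵥ (Qd *ᵥ x t) + star (x t) ⬝ᵥ (Q t *ᵥ xd) := by
    rw [heq1, heq1, heq1, ← Finset.sum_add_distrib, ← Finset.sum_add_distrib]
    refine Finset.sum_congr rfl fun i _ => ?_
    rw [Finset.sum_add_distrib, mul_add]
    ring
  simp only [Complex.reCLM_apply] at hre
  rw [heq2] at hre
  have hfun : (fun s => (1 / 2 : ℝ) * (star (x s) ⬝ᵥ (Q s *ᵥ x s)).re)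
      = fun s => (1 / 2 : ℝ) * (∑ i, conj (x s i) * ∑ j, Q s i j * x s j).re := by
    funext s; rw [heq1]
  rw [hfun]
  exact hre

end AuxPH

/-- **Power balance and dissipation for port-Hamiltonian LTV systems.**
If the LTV system is port-Hamiltonian, then every state-input-output solution `(x,u,y)`
satisfies, for a.e. `t ∈ 𝕋`, the power balance equation
`d/dt H(t,x(t)) = −[Q(t)x(t); u(t)]ᴴ W(t) [Q(t)x(t); u(t)] + Re(y(t)ᴴ u(t))`
where `H(t,x) = ½ xᴴ Q(t) x` and `W = [[R, P],[Pᴴ, S]]`; in particular the dissipation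
inequality `d/dt H(t,x(t)) ≤ Re(y(t)ᴴ u(t))` holds for a.e. `t ∈ 𝕋`. -/
theorem pH_powerBalance_and_dissipation
    (T : Set ℝ) (hTopen : IsOpen T) (hTconn : T.OrdConnected)
    (A : ℝ → Matrix (Fin n) (Fin n) ℂ) (B : ℝ → Matrix (Fin n) (Fin m) ℂ)
    (C : ℝ → Matrix (Fin m) (Fin n) ℂ) (D : ℝ → Matrix (Fin m) (Fin m) ℂ)
    (hLTV : IsLTV T A B C D)
    (Q Q' J R K : ℝ → Matrix (Fin n) (Fin n) ℂ)
    (G P : ℝ → Matrix (Fin n) (Fin m) ℂ) (S N : ℝ → Matrix (Fin m) (Fin m) ℂ)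
    (hPH : IsPH T A B C D Q Q' J R K G P S N)
    (x : ℝ → Fin n → ℂ) (u y : ℝ → Fin m → ℂ)
    (hsol : IsSolution T A B C D x u y) :
    ∀ᵐ t ∂(volume : Measure ℝ), t ∈ T →
      HasDerivAt (fun s => (1 / 2 : ℝ) * (star (x s) ⬝ᵥ (Q s *ᵥ x s)).re)
        (-(star (Sum.elim (Q t *ᵥ x t) (u t)) ⬝ᵥ
            (Matrix.fromBlocks (R t) (P t) ((P t)ᴴ) (S t) *ᵥ Sum.elim (Q t *ᵥ x t) (u t))).re
          + (star (y t) ⬝ᵥ u t).re) t ∧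
      -(star (Sum.elim (Q t *ᵥ x t) (u t)) ⬝ᵥ
            (Matrix.fromBlocks (R t) (P t) ((P t)ᴴ) (S t) *ᵥ Sum.elim (Q t *ᵥ x t) (u t))).re
          + (star (y t) ⬝ᵥ u t).re ≤ (star (y t) ⬝ᵥ u t).re := by
  obtain ⟨hu, hy2, hint, hxeq, hyae⟩ := hsol
  obtain ⟨hQpsd, hQ'loc, hQeq, -, -, -, -, -, -, -, hstr⟩ := hPH
  have hdx := ae_hasDerivAt_loc hTopen hTconn hint hxeq
  have hQint := fun a (ha : a ∈ T) b (hb : b ∈ T) =>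
    memLp_one_iff_integrable.mp (hQ'loc a ha b hb)
  have hdQ := ae_hasDerivAt_loc hTopen hTconn hQint hQeq
  filter_upwards [hdx, hdQ, hstr, hyae] with t h1 h2 h3 h4 htT
  obtain ⟨hJ, hN, hK, hW, hA, hB, hC, hD⟩ := h3 htT
  have hQherm : (Q t)ᴴ = Q t := (hQpsd t htT).1
  have hyeq : y t = ((G t + P t)ᴴ * Q t) *ᵥ x t + (S t - N t) *ᵥ u t := by
    rw [h4 htT, hC, hD]
  have halg := algebra_key (Q t) (Q' t) (J t) (R t) (K t) (G t) (P t) (S t) (N t)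
    (x t) (u t) (y t) hQherm hJ hN hK hyeq
  have hd := quad_hasDerivAt (h1 htT) (h2 htT)
  have hxdeq : A t *ᵥ x t + B t *ᵥ u t
      = ((J t - R t) * Q t - K t) *ᵥ x t + (G t - P t) *ᵥ u t := by rw [hA, hB]
  rw [hxdeq] at hd
  refine ⟨halg ▸ hd, ?_⟩
  have hpos := hW.dotProduct_mulVec_nonneg (Sum.elim (Q t *ᵥ x t) (u t))
  have hre : 0 ≤ (star (Sum.elim (Q t *ᵥ x t) (u t)) ⬝ᵥ
      (Matrix.fromBlocks (R t) (P t) ((P t)ᴴ) (S t) *ᵥ Sum.elim (Q t *ᵥ x t) (u t))).re := by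
    have := (Complex.le_def.mp hpos).1
    simpa using this
  linarith
end
end

section
/- KYP implies passivity: if Q : 𝕋 → ℂ^{n×n} is pointwise Hermitian positive semidefinite, locally absolutely continuous with a.e. derivative Q̇ ∈ L¹_loc, and satisfies the KYP inequality, then V_Q(t,x) = ½ x* Q(t) x is a storage function for the LTV system; in particular the system is passive. -/
open MeasureTheory Matrix Set
open scoped ENNReal ComplexOrder

noncomputable section

attribute [local instance] Matrix.normedAddCommGroup Matrix.normedSpace

variable {n m : ℕ}

/-- A storage function for the LTV system on `T`: nonnegative, vanishing at `x = 0`,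
and satisfying the dissipation inequality along all state-input-output solutions. -/
def IsStorage (T : Set ℝ) (A : ℝ → Matrix (Fin n) (Fin n) ℂ) (B : ℝ → Matrix (Fin n) (Fin m) ℂ)
    (C : ℝ → Matrix (Fin m) (Fin n) ℂ) (D : ℝ → Matrix (Fin m) (Fin m) ℂ)
    (V : ℝ → (Fin n → ℂ) → ℝ) : Prop :=
  (∀ t ∈ T, ∀ x : Fin n → ℂ, 0 ≤ V t x) ∧
  (∀ t ∈ T, V t 0 = 0) ∧
  (∀ x u y, IsSolution T A B C D x u y →
    ∀ t₀ ∈ T, ∀ t₁ ∈ T, t₀ ≤ t₁ →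
      V t₁ (x t₁) - V t₀ (x t₀) ≤ ∫ t in t₀..t₁, (star (y t) ⬝ᵥ u t).re)

section Auxiliary

/-- Integration by parts / product rule for primitives of integrable functions
(endpoint version, proved via Fubini). -/
private lemma parts_aux {s t : ℝ} (hst : s ≤ t) {f g F G : ℝ → ℂ}
    (hf : IntegrableOn f (Icc s t)) (hg : IntegrableOn g (Icc s t))
    (hF : ∀ r ∈ Icc s t, F r = F s + ∫ v in s..r, f v)
    (hG : ∀ r ∈ Icc s t, G r = G s + ∫ v in s..r, g v) :
    F t * G t - F s * G s = ∫ r in Ioc s t, (f r * G r + F r * g r) := by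
  have hsub : Ioc s t ⊆ Icc s t := Ioc_subset_Icc_self
  have hFc : ContinuousOn F (Icc s t) := by
    have h1 : ContinuousOn (fun r => F s + ∫ v in Ioc s r, f v) (Icc s t) :=
      continuousOn_const.add (intervalIntegral.continuousOn_primitive hf)
    exact h1.congr fun r hr => by
      rw [hF r hr, intervalIntegral.integral_of_le hr.1]
  have hGc : ContinuousOn G (Icc s t) := by
    have h1 : ContinuousOn (fun r => G s + ∫ v in Ioc s r, g v) (Icc s t) :=
      continuousOn_const.add (intervalIntegral.continuousOn_primitive hg)
    exact h1.congr fun r hr => by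
      rw [hG r hr, intervalIntegral.integral_of_le hr.1]
  have hfG : IntegrableOn (fun r => f r * G r) (Icc s t) :=
    hf.mul_continuousOn hGc isCompact_Icc
  have hFg : IntegrableOn (fun r => F r * g r) (Icc s t) :=
    IntegrableOn.continuousOn_mul hFc hg isCompact_Icc
  have hfI : IntegrableOn f (Ioc s t) := hf.mono_set hsub
  have hgI : IntegrableOn g (Ioc s t) := hg.mono_set hsub
  have hfG' : IntegrableOn (fun r => f r * G r) (Ioc s t) := hfG.mono_set hsub
  have hFg' : IntegrableOn (fun r => F r * g r) (Ioc s t) := hFg.mono_set hsub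
  have hgiv : ∀ r ∈ Icc s t, IntervalIntegrable g volume s r := fun r hr =>
    (intervalIntegrable_iff_integrableOn_Ioc_of_le hr.1).2
      (hg.mono_set (Ioc_subset_Icc_self.trans (Icc_subset_Icc_right hr.2)))
  have hGdiff : ∀ v ∈ Ioc s t, (∫ r in Ioc v t, g r) = G t - G v := by
    intro v hv
    have h1 : (∫ r in v..t, g r)
        = (∫ r in s..t, g r) - ∫ r in s..v, g r :=
      (intervalIntegral.integral_interval_sub_left (hgiv t ⟨hst, le_rfl⟩)
        (hgiv v ⟨hv.1.le, hv.2⟩)).symm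
    rw [← intervalIntegral.integral_of_le hv.2, h1, hG t ⟨hst, le_rfl⟩, hG v ⟨hv.1.le, hv.2⟩]
    ring
  have hGst : (∫ r in Ioc s t, g r) = G t - G s := by
    rw [← intervalIntegral.integral_of_le hst, hG t ⟨hst, le_rfl⟩]; ring
  have hFst : (∫ r in Ioc s t, f r) = F t - F s := by
    rw [← intervalIntegral.integral_of_le hst, hF t ⟨hst, le_rfl⟩]; ring
  set μ := volume.restrict (Ioc s t) with hμ
  have hk : Integrable (Function.uncurry fun r v => (Iic r).indicator f v * g r) (μ.prod μ) := by
    have hbase : Integrable (fun p : ℝ × ℝ => f p.2 * g p.1) (μ.prod μ) := by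
      have := hgI.mul_prod hfI
      simpa [mul_comm] using this
    have hS : MeasurableSet {p : ℝ × ℝ | p.2 ≤ p.1} :=
      measurableSet_le measurable_snd measurable_fst
    have heq : (Function.uncurry fun r v => (Iic r).indicator f v * g r)
        = {p : ℝ × ℝ | p.2 ≤ p.1}.indicator (fun p => f p.2 * g p.1) := by
      ext p
      by_cases h : p.2 ≤ p.1 <;>
        simp [Function.uncurry, Set.indicator_apply, h, Set.mem_Iic]
    rw [heq]
    exact hbase.indicator hS
  have fub : (∫ r in Ioc s t, (F r - F s) * g r) = ∫ v in Ioc s t, f v * (G t - G v) := by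
    have hFsub : ∀ r ∈ Ioc s t, F r - F s = ∫ v in Ioc s t, (Iic r).indicator f v := by
      intro r hr
      have hIr : Iic r ∩ Ioc s t = Ioc s r := by
        ext z
        simp only [mem_inter_iff, mem_Iic, mem_Ioc]
        constructor
        · rintro ⟨hz, h1, _⟩; exact ⟨h1, hz⟩
        · rintro ⟨h1, h2⟩; exact ⟨h2, h1, h2.trans hr.2⟩
      rw [hF r (hsub hr), intervalIntegral.integral_of_le hr.1.le]
      rw [integral_indicator measurableSet_Iic, Measure.restrict_restrict measurableSet_Iic, hIr]
      ring
    calc (∫ r in Ioc s t, (F r - F s) * g r)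
        = ∫ r in Ioc s t, ∫ v in Ioc s t, (Iic r).indicator f v * g r := by
          refine setIntegral_congr_fun measurableSet_Ioc fun r hr => ?_
          rw [hFsub r hr, ← integral_mul_const]
      _ = ∫ v in Ioc s t, ∫ r in Ioc s t, (Iic r).indicator f v * g r :=
          MeasureTheory.integral_integral_swap hk
      _ = ∫ v in Ioc s t, f v * (G t - G v) := by
          refine setIntegral_congr_fun measurableSet_Ioc fun v hv => ?_
          have h1 : (fun r => (Iic r).indicator f v * g r)
              = fun r => (Ici v).indicator (fun r => f v * g r) r := by
            ext r
            by_cases h : v ≤ r <;>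
              simp [Set.indicator_apply, h, Set.mem_Iic, Set.mem_Ici]
          have hIv : Ici v ∩ Ioc s t = Icc v t := by
            ext z
            simp only [mem_inter_iff, mem_Ici, mem_Ioc, mem_Icc]
            constructor
            · rintro ⟨hz, _, h2⟩; exact ⟨hz, h2⟩
            · rintro ⟨h1, h2⟩; exact ⟨h1, lt_of_lt_of_le hv.1 h1, h2⟩
          rw [h1, integral_indicator measurableSet_Ici,
            Measure.restrict_restrict measurableSet_Ici, hIv,
            integral_Icc_eq_integral_Ioc, integral_const_mul, hGdiff v hv]
  have e1 : (∫ r in Ioc s t, F r * g r)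
      = F s * (G t - G s) + ∫ v in Ioc s t, f v * (G t - G v) := by
    rw [← fub]
    have h2 : (∫ r in Ioc s t, (F r - F s) * g r)
        = (∫ r in Ioc s t, F r * g r) - F s * (G t - G s) := by
      simp_rw [sub_mul]
      rw [integral_sub hFg' (hgI.const_mul (F s)), integral_const_mul, hGst]
    rw [h2]; ring
  have e2 : (∫ v in Ioc s t, f v * (G t - G v))
      = (F t - F s) * G t - ∫ v in Ioc s t, f v * G v := by
    simp_rw [mul_sub]
    rw [integral_sub (hfI.mul_const (G t)) hfG', integral_mul_const, hFst]
  rw [integral_add hfG' hFg', e1, e2]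
  ring

/-- Integration by parts for primitives, all-points version with integrability. -/
private lemma parts_all {s t : ℝ} {f g F G : ℝ → ℂ}
    (hf : IntegrableOn f (Icc s t)) (hg : IntegrableOn g (Icc s t))
    (hF : ∀ r ∈ Icc s t, F r = F s + ∫ v in s..r, f v)
    (hG : ∀ r ∈ Icc s t, G r = G s + ∫ v in s..r, g v) :
    IntegrableOn (fun r => f r * G r + F r * g r) (Icc s t) ∧
    ∀ r ∈ Icc s t, F r * G r = F s * G s + ∫ v in s..r, (f v * G v + F v * g v) := by
  have hFc : ContinuousOn F (Icc s t) := by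
    have h1 : ContinuousOn (fun r => F s + ∫ v in Ioc s r, f v) (Icc s t) :=
      continuousOn_const.add (intervalIntegral.continuousOn_primitive hf)
    exact h1.congr fun r hr => by
      rw [hF r hr, intervalIntegral.integral_of_le hr.1]
  have hGc : ContinuousOn G (Icc s t) := by
    have h1 : ContinuousOn (fun r => G s + ∫ v in Ioc s r, g v) (Icc s t) :=
      continuousOn_const.add (intervalIntegral.continuousOn_primitive hg)
    exact h1.congr fun r hr => by
      rw [hG r hr, intervalIntegral.integral_of_le hr.1]
  refine ⟨(hf.mul_continuousOn hGc isCompact_Icc).add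
    (IntegrableOn.continuousOn_mul hFc hg isCompact_Icc), fun r hr => ?_⟩
  have hsub : Icc s r ⊆ Icc s t := Icc_subset_Icc_right hr.2
  have h := parts_aux hr.1 (hf.mono_set hsub) (hg.mono_set hsub)
    (fun ρ hρ => hF ρ (hsub hρ)) (fun ρ hρ => hG ρ (hsub hρ))
  rw [← intervalIntegral.integral_of_le hr.1] at h
  linear_combination h

private lemma dot_conjT {k l : Type*} [Fintype k] [Fintype l]
    (M : Matrix k l ℂ) (w : l → ℂ) (v : k → ℂ) :
    star w ⬝ᵥ (Mᴴ *ᵥ v) = star (M *ᵥ w) ⬝ᵥ v := by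
  rw [Matrix.star_mulVec, Matrix.dotProduct_mulVec]

/-- The pointwise inequality extracted from the KYP inequality. -/
private lemma key_ineq {n m : ℕ} (A : Matrix (Fin n) (Fin n) ℂ) (B : Matrix (Fin n) (Fin m) ℂ)
    (C : Matrix (Fin m) (Fin n) ℂ) (D : Matrix (Fin m) (Fin m) ℂ) (Q Q' : Matrix (Fin n) (Fin n) ℂ)
    (x : Fin n → ℂ) (u : Fin m → ℂ)
    (hM : (Matrix.fromBlocks (-(Aᴴ * Q) - Q * A - Q') (Cᴴ - Q * B)
      (C - Bᴴ * Q) (D + Dᴴ)).PosSemidef) :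
    (star (A *ᵥ x + B *ᵥ u) ⬝ᵥ (Q *ᵥ x) + star x ⬝ᵥ (Q' *ᵥ x)
      + star x ⬝ᵥ (Q *ᵥ (A *ᵥ x + B *ᵥ u))).re
      ≤ 2 * (star (C *ᵥ x + D *ᵥ u) ⬝ᵥ u).re := by
  have h0 := hM.dotProduct_mulVec_nonneg (Sum.elim x u)
  set M := Matrix.fromBlocks (-(Aᴴ * Q) - Q * A - Q') (Cᴴ - Q * B) (C - Bᴴ * Q) (D + Dᴴ)
    with hMdef
  have hre : 0 ≤ (star (Sum.elim x u) ⬝ᵥ (M *ᵥ Sum.elim x u)).re := by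
    have := (Complex.le_def.1 h0).1
    simpa using this
  have hz : star (Sum.elim x u) = Sum.elim (star x) (star u) := by
    funext i; cases i <;> simp
  have hMv : M *ᵥ Sum.elim x u
      = Sum.elim ((-(Aᴴ * Q) - Q * A - Q') *ᵥ x + (Cᴴ - Q * B) *ᵥ u)
        ((C - Bᴴ * Q) *ᵥ x + (D + Dᴴ) *ᵥ u) := by
    rw [hMdef, Matrix.fromBlocks_mulVec]
    simp [Sum.elim_comp_inl, Sum.elim_comp_inr]
  have hkey : star (Sum.elim x u) ⬝ᵥ (M *ᵥ Sum.elim x u)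
      + (star (A *ᵥ x + B *ᵥ u) ⬝ᵥ (Q *ᵥ x) + star x ⬝ᵥ (Q' *ᵥ x)
        + star x ⬝ᵥ (Q *ᵥ (A *ᵥ x + B *ᵥ u)))
      = star (C *ᵥ x) ⬝ᵥ u + star u ⬝ᵥ (C *ᵥ x)
        + star (D *ᵥ u) ⬝ᵥ u + star u ⬝ᵥ (D *ᵥ u) := by
    rw [hz, hMv]
    simp only [sumElim_dotProduct_sumElim, Matrix.sub_mulVec, Matrix.add_mulVec,
      Matrix.neg_mulVec, ← Matrix.mulVec_mulVec, dotProduct_add, dotProduct_sub,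
      dotProduct_neg, star_add, add_dotProduct, Matrix.mulVec_add,
      dot_conjT]
    ring
  have hconj : ∀ (a b : Fin m → ℂ), (star a ⬝ᵥ b).re = (star b ⬝ᵥ a).re := by
    intro a b
    rw [Matrix.star_dotProduct]
    simp
  have hrhs : (star (C *ᵥ x) ⬝ᵥ u + star u ⬝ᵥ (C *ᵥ x)
      + star (D *ᵥ u) ⬝ᵥ u + star u ⬝ᵥ (D *ᵥ u)).re
      = 2 * (star (C *ᵥ x + D *ᵥ u) ⬝ᵥ u).re := by
    simp only [Complex.add_re, star_add, add_dotProduct]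
    rw [hconj u (C *ᵥ x), hconj u (D *ᵥ u)]
    ring
  have h2 := congrArg Complex.re hkey
  rw [Complex.add_re, hrhs] at h2
  linarith [hre, h2]

/-- Entry extraction as a continuous linear map (matrices with the sup norm). -/
private def entryCLM {k l : ℕ} (i : Fin k) (j : Fin l) : Matrix (Fin k) (Fin l) ℂ →L[ℝ] ℂ :=
  LinearMap.mkContinuous
    { toFun := fun M => M i j
      map_add' := fun _ _ => rfl
      map_smul' := fun _ _ => rfl }
    1 (fun M => by rw [one_mul]; exact M.norm_entry_le_entrywise_sup_norm)

private lemma II_of_Icc {E : Type*} [NormedAddCommGroup E] {h : ℝ → E} {a b r : ℝ}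
    (hh : IntegrableOn h (Icc a b)) (hr : r ∈ Icc a b) : IntervalIntegrable h volume a r :=
  (intervalIntegrable_iff_integrableOn_Ioc_of_le hr.1).2
    (hh.mono_set (Ioc_subset_Icc_self.trans (Icc_subset_Icc_right hr.2)))

end Auxiliary

set_option maxHeartbeats 1000000

/-- **KYP implies passivity.** If `Q` is pointwise Hermitian positive semidefinite,
locally absolutely continuous with a.e. derivative `Q' ∈ L¹_loc`, and satisfies the
KYP inequality, then `V_Q(t,x) = ½ xᴴ Q(t) x` is a storage function for the LTV system;
in particular the system is passive. -/
theorem KYP_implies_passive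
    (T : Set ℝ) (hTopen : IsOpen T) (hTconn : T.OrdConnected)
    (A : ℝ → Matrix (Fin n) (Fin n) ℂ) (B : ℝ → Matrix (Fin n) (Fin m) ℂ)
    (C : ℝ → Matrix (Fin m) (Fin n) ℂ) (D : ℝ → Matrix (Fin m) (Fin m) ℂ)
    (hLTV : IsLTV T A B C D)
    (Q Q' : ℝ → Matrix (Fin n) (Fin n) ℂ)
    (hQpsd : ∀ t ∈ T, (Q t).PosSemidef)
    (hQ' : LocLp T 1 Q')
    (hQac : ∀ s ∈ T, ∀ t ∈ T, Q t - Q s = ∫ r in s..t, Q' r)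
    (hKYP : ∀ᵐ t ∂(volume : Measure ℝ), t ∈ T →
      (Matrix.fromBlocks
        (-((A t)ᴴ * Q t) - Q t * A t - Q' t) ((C t)ᴴ - Q t * B t)
        (C t - (B t)ᴴ * Q t) (D t + (D t)ᴴ)).PosSemidef) :
    IsStorage T A B C D (fun t x => (1 / 2 : ℝ) * (star x ⬝ᵥ (Q t *ᵥ x)).re) ∧
    ∃ V : ℝ → (Fin n → ℂ) → ℝ, IsStorage T A B C D V := by
  have hstorage : IsStorage T A B C D (fun t x => (1 / 2 : ℝ) * (star x ⬝ᵥ (Q t *ᵥ x)).re) := by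
    refine ⟨?_, ?_, ?_⟩
    · intro t ht x
      have h := (hQpsd t ht).dotProduct_mulVec_nonneg x
      have h2 := (Complex.le_def.1 h).1
      simp only [Complex.zero_re] at h2
      have : (0:ℝ) ≤ (star x ⬝ᵥ (Q t *ᵥ x)).re := h2
      positivity
    · intro t ht
      simp
    · intro x u y hsol t₀ ht₀ t₁ ht₁ h01
      obtain ⟨hu2, hy2, hfint, hxeq, hyeq⟩ := hsol
      set f : ℝ → Fin n → ℂ := fun r => A r *ᵥ x r + B r *ᵥ u r with hfdef
      have hIccT : Icc t₀ t₁ ⊆ T := hTconn.out ht₀ ht₁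
      have ht1m : t₁ ∈ Icc t₀ t₁ := right_mem_Icc.2 h01
      have hfIcc : IntegrableOn f (Icc t₀ t₁) := hfint t₀ ht₀ t₁ ht₁
      have hQ'Icc :=
        memLp_one_iff_integrable.mp (hQ' t₀ ht₀ t₁ ht₁)
      have hxall : ∀ r ∈ Icc t₀ t₁, x r = x t₀ + ∫ v in t₀..r, f v := by
        intro r hr
        have h := hxeq t₀ ht₀ r (hIccT hr)
        rw [← h]; abel
      have hQall : ∀ r ∈ Icc t₀ t₁, Q r = Q t₀ + ∫ v in t₀..r, Q' v := by
        intro r hr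
        have h := hQac t₀ ht₀ r (hIccT hr)
        rw [← h]; abel
      -- componentwise
      have hfj : ∀ j : Fin n, IntegrableOn (fun v => f v j) (Icc t₀ t₁) := fun j =>
        (ContinuousLinearMap.proj (R := ℝ) (φ := fun _ : Fin n => ℂ) j).integrable_comp hfIcc
      have hcfi : ∀ i : Fin n, IntegrableOn (fun v => star (f v i)) (Icc t₀ t₁) := fun i => by
        have := (Complex.conjCLE : ℂ →L[ℝ] ℂ).integrable_comp (hfj i)
        simpa [Complex.star_def, IntegrableOn] using this
      have hQ'ij : ∀ i j : Fin n, IntegrableOn (fun v => Q' v i j) (Icc t₀ t₁) := fun i j =>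
        (entryCLM i j).integrable_comp hQ'Icc
      have hxj : ∀ (j : Fin n), ∀ r ∈ Icc t₀ t₁, x r j = x t₀ j + ∫ v in t₀..r, f v j := by
        intro j r hr
        have h1 := congrArg (fun w : Fin n → ℂ => w j) (hxall r hr)
        simp only [Pi.add_apply] at h1
        rw [h1]
        congr 1
        exact ((ContinuousLinearMap.proj (R := ℝ) (φ := fun _ : Fin n => ℂ)
          j).intervalIntegral_comp_comm (II_of_Icc hfIcc hr)).symm
      have hcxi : ∀ (i : Fin n), ∀ r ∈ Icc t₀ t₁,
          star (x r i) = star (x t₀ i) + ∫ v in t₀..r, star (f v i) := by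
        intro i r hr
        have h1 := congrArg star (hxj i r hr)
        rw [star_add] at h1
        rw [h1]
        congr 1
        have h2 := (Complex.conjCLE : ℂ →L[ℝ] ℂ).intervalIntegral_comp_comm
          (II_of_Icc (hfj i) hr)
        simpa [Complex.star_def] using h2.symm
      have hQij : ∀ (i j : Fin n), ∀ r ∈ Icc t₀ t₁,
          Q r i j = Q t₀ i j + ∫ v in t₀..r, Q' v i j := by
        intro i j r hr
        have h1 := congrArg (fun M : Matrix (Fin n) (Fin n) ℂ => M i j) (hQall r hr)
        simp only [Matrix.add_apply] at h1
        rw [h1]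
        congr 1
        exact ((entryCLM i j).intervalIntegral_comp_comm (II_of_Icc hQ'Icc hr)).symm
      -- triple products via integration by parts (twice)
      set dd : Fin n × Fin n → ℝ → ℂ := fun p v =>
        (star (f v p.1) * Q v p.1 p.2 + star (x v p.1) * Q' v p.1 p.2) * x v p.2
          + star (x v p.1) * Q v p.1 p.2 * f v p.2 with hdd
      have hparts : ∀ p : Fin n × Fin n,
          IntegrableOn (dd p) (Icc t₀ t₁) ∧
          star (x t₁ p.1) * Q t₁ p.1 p.2 * x t₁ p.2
            = star (x t₀ p.1) * Q t₀ p.1 p.2 * x t₀ p.2 + ∫ v in t₀..t₁, dd p v := by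
        intro p
        obtain ⟨h1int, h1⟩ := parts_all (hcfi p.1) (hQ'ij p.1 p.2) (hcxi p.1) (hQij p.1 p.2)
        obtain ⟨h2int, h2⟩ := parts_all h1int (hfj p.2) h1 (hxj p.2)
        exact ⟨h2int, h2 t₁ ht1m⟩
      -- the derivative of the quadratic form
      set ψ : ℝ → ℂ := fun v => star (f v) ⬝ᵥ (Q v *ᵥ x v) + star (x v) ⬝ᵥ (Q' v *ᵥ x v)
        + star (x v) ⬝ᵥ (Q v *ᵥ f v) with hψdef
      have hdot : ∀ (a b : Fin n → ℂ) (M : Matrix (Fin n) (Fin n) ℂ),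
          star a ⬝ᵥ (M *ᵥ b) = ∑ p : Fin n × Fin n, star (a p.1) * M p.1 p.2 * b p.2 := by
        intro a b M
        rw [Fintype.sum_prod_type]
        simp [dotProduct, Matrix.mulVec, Finset.mul_sum, mul_assoc]
      have hψeq : ψ = fun v => ∑ p : Fin n × Fin n, dd p v := by
        funext v
        rw [hψdef]
        simp only [hdot, hdd]
        rw [← Finset.sum_add_distrib, ← Finset.sum_add_distrib]
        refine Finset.sum_congr rfl fun p _ => ?_
        ring
      have hψIcc : IntegrableOn ψ (Icc t₀ t₁) := by
        rw [hψeq]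
        exact integrable_finset_sum _ fun p _ => (hparts p).1
      have hψII : IntervalIntegrable ψ volume t₀ t₁ := II_of_Icc hψIcc ht1m
      have hφ : star (x t₁) ⬝ᵥ (Q t₁ *ᵥ x t₁) - star (x t₀) ⬝ᵥ (Q t₀ *ᵥ x t₀)
          = ∫ v in t₀..t₁, ψ v := by
        simp only [hdot (x t₁) (x t₁) (Q t₁), hdot (x t₀) (x t₀) (Q t₀), hψeq]
        rw [intervalIntegral.integral_finset_sum
          (fun p _ => II_of_Icc (hparts p).1 ht1m)]
        rw [← Finset.sum_sub_distrib]
        refine Finset.sum_congr rfl fun p _ => ?_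
        rw [(hparts p).2]
        ring
      -- pass to real parts
      have hψre : (∫ v in t₀..t₁, (ψ v).re) = (∫ v in t₀..t₁, ψ v).re := by
        have := Complex.reCLM.intervalIntegral_comp_comm hψII
        simpa using this
      -- integrability of the right-hand side integrand
      have huy : IntegrableOn (fun v => star (y v) ⬝ᵥ u v) (Icc t₀ t₁) := by
        have hu := hu2 t₀ ht₀ t₁ ht₁
        have hy := hy2 t₀ ht₀ t₁ ht₁
        have hexp : (fun v => star (y v) ⬝ᵥ u v) = fun v => ∑ i, star (y v i) * u v i := by
          funext v
          simp [dotProduct]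
        rw [hexp]
        refine integrable_finset_sum _ fun i _ => ?_
        have hyi : MemLp (fun v => y v i) 2 (volume.restrict (Icc t₀ t₁)) :=
          (ContinuousLinearMap.proj (R := ℝ) (φ := fun _ : Fin m => ℂ) i).comp_memLp' hy
        have hcyi : MemLp (fun v => star (y v i)) 2 (volume.restrict (Icc t₀ t₁)) := by
          have := (Complex.conjCLE : ℂ →L[ℝ] ℂ).comp_memLp' hyi
          simpa [Function.comp_def, Complex.conjCAE_apply, Complex.star_def] using this
        have hui : MemLp (fun v => u v i) 2 (volume.restrict (Icc t₀ t₁)) :=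
          (ContinuousLinearMap.proj (R := ℝ) (φ := fun _ : Fin m => ℂ) i).comp_memLp' hu
        have hmul := hui.smul hcyi (r := 1)
          (hpqr := ⟨by rw [ENNReal.inv_two_add_inv_two, inv_one]⟩)
        rw [memLp_one_iff_integrable] at hmul
        simpa [smul_eq_mul, Pi.mul_def] using hmul
      have hint2 : IntervalIntegrable (fun v => (star (y v) ⬝ᵥ u v).re) volume t₀ t₁ :=
        II_of_Icc huy.re ht1m
      have hint1 : IntervalIntegrable (fun v => (1/2 : ℝ) * (ψ v).re) volume t₀ t₁ :=
        II_of_Icc (hψIcc.re.const_mul _) ht1m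
      -- almost-everywhere inequality
      have haeT : ∀ᵐ v ∂(volume.restrict (Icc t₀ t₁)),
          (1/2 : ℝ) * (ψ v).re ≤ (star (y v) ⬝ᵥ u v).re := by
        filter_upwards [ae_restrict_of_ae hKYP, ae_restrict_of_ae hyeq,
          ae_restrict_mem measurableSet_Icc] with v hK hy hv
        have hvT := hIccT hv
        have h1 := key_ineq (A v) (B v) (C v) (D v) (Q v) (Q' v) (x v) (u v) (hK hvT)
        rw [hy hvT]
        rw [hψdef]
        simp only [hfdef]
        linarith [h1]
      -- conclude
      have hest := intervalIntegral.integral_mono_ae_restrict h01 hint1 hint2 haeT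
      calc (1 / 2 : ℝ) * (star (x t₁) ⬝ᵥ (Q t₁ *ᵥ x t₁)).re
            - (1 / 2 : ℝ) * (star (x t₀) ⬝ᵥ (Q t₀ *ᵥ x t₀)).re
          = ∫ v in t₀..t₁, (1/2 : ℝ) * (ψ v).re := by
            rw [intervalIntegral.integral_const_mul, hψre, ← hφ]
            rw [Complex.sub_re]
            ring
        _ ≤ ∫ v in t₀..t₁, (star (y v) ⬝ᵥ u v).re := hest
  exact ⟨hstorage, _, hstorage⟩
end
end

section
/- Time reparametrization: let 𝕋̂ ⊆ ℝ be another open interval and θ ∈ C¹(𝕋̂, 𝕋) a diffeomorphism with θ̇ > 0 pointwise, and define Â = θ̇·(A∘θ), B̂ = θ̇·(B∘θ), Ĉ = θ̇·(C∘θ), D̂ = θ̇·(D∘θ). Then (x,u,y) is a state-input-output solution of the LTV system with coefficients (A,B,C,D) on 𝕋 if and only if (x∘θ, u∘θ, θ̇·(y∘θ)) is a state-input-output solution of the LTV system with coefficients (Â,B̂,Ĉ,D̂) on 𝕋̂. Moreover the supply is invariant: for all t̂₀ ≤ t̂₁ in 𝕋̂, setting t₀ = θ(t̂₀), t₁ =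 θ(t̂₁), one has t₀ ≤ t₁ and ∫_{t̂₀}^{t̂₁} Re( (θ̇(t̂) (y∘θ)(t̂))* (u∘θ)(t̂) ) dt̂ = ∫_{t₀}^{t₁} Re( y(t)* u(t) ) dt. -/
open MeasureTheory Matrix Set
open scoped ENNReal ComplexOrder

noncomputable section

attribute [local instance] Matrix.normedAddCommGroup Matrix.normedSpace

variable {n m : ℕ}

structure NiceChart (U V : Set ℝ) (φ φ' : ℝ → ℝ) : Prop where
  opn : IsOpen U
  conn : U.OrdConnected
  deriv : ∀ t ∈ U, HasDerivAt φ (φ' t) t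
  cont' : ContinuousOn φ' U
  pos : ∀ t ∈ U, 0 < φ' t
  img : φ '' U = V

namespace NiceChart

variable {U V : Set ℝ} {φ φ' : ℝ → ℝ} (h : NiceChart U V φ φ')
include h

theorem contOn : ContinuousOn φ U := fun t ht =>
  (h.deriv t ht).continuousAt.continuousWithinAt

theorem mono : StrictMonoOn φ U := by
  refine strictMonoOn_of_deriv_pos (convex_iff_ordConnected.2 h.conn) h.contOn fun x hx => ?_
  rw [h.opn.interior_eq] at hx
  rw [(h.deriv x hx).deriv]
  exact h.pos x hx

theorem inj : InjOn φ U := h.mono.injOn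

theorem subIcc {a b : ℝ} (ha : a ∈ U) (hb : b ∈ U) : Icc a b ⊆ U := h.conn.out ha hb

theorem memV {a : ℝ} (ha : a ∈ U) : φ a ∈ V := h.img ▸ mem_image_of_mem φ ha

theorem imageIcc {a b : ℝ} (ha : a ∈ U) (hb : b ∈ U) (hab : a ≤ b) :
    φ '' Icc a b = Icc (φ a) (φ b) := by
  apply Subset.antisymm
  · rintro - ⟨t, ht, rfl⟩
    exact ⟨h.mono.monotoneOn ha (h.subIcc ha hb ht) ht.1,
      h.mono.monotoneOn (h.subIcc ha hb ht) hb ht.2⟩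
  · exact intermediate_value_Icc hab (h.contOn.mono (h.subIcc ha hb))

theorem derivWithin {s : Set ℝ} (hs : s ⊆ U) : ∀ x ∈ s, HasDerivWithinAt φ (φ' x) s x :=
  fun x hx => (h.deriv x (hs hx)).hasDerivWithinAt


/-- countable covering of an open set by rational closed intervals inside it -/
theorem cover : U ⊆ ⋃ p ∈ {p : ℚ × ℚ | Icc (p.1 : ℝ) (p.2 : ℝ) ⊆ U}, Icc (p.1 : ℝ) (p.2 : ℝ) := by
  intro t ht
  obtain ⟨ε, hε, hball⟩ := Metric.isOpen_iff.1 h.opn t ht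
  obtain ⟨q1, hq1, hq1'⟩ := exists_rat_btwn (show t - ε < t by linarith)
  obtain ⟨q2, hq2, hq2'⟩ := exists_rat_btwn (show t < t + ε by linarith)
  have hsub : Icc (q1 : ℝ) (q2 : ℝ) ⊆ U := by
    refine subset_trans ?_ hball
    intro z hz
    rw [Real.ball_eq_Ioo]
    exact ⟨lt_of_lt_of_le hq1 hz.1, lt_of_le_of_lt hz.2 hq2'⟩
  exact mem_biUnion (x := (q1, q2)) hsub ⟨hq1'.le, hq2.le⟩

theorem null_image {S : Set ℝ} (hS : S ⊆ U) (h0 : volume S = 0) : volume (φ '' S) = 0 := by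
  have hcov : φ '' S ⊆ ⋃ p ∈ {p : ℚ × ℚ | Icc (p.1 : ℝ) (p.2 : ℝ) ⊆ U},
      φ '' (S ∩ Icc (p.1 : ℝ) (p.2 : ℝ)) := by
    rintro - ⟨t, ht, rfl⟩
    obtain ⟨I, hI, htI⟩ := mem_iUnion₂.1 (h.cover (hS ht))
    exact mem_iUnion₂.2 ⟨I, hI, mem_image_of_mem φ ⟨ht, htI⟩⟩
  refine measure_mono_null hcov (measure_biUnion_null_iff (to_countable _) |>.2 ?_)
  rintro ⟨q1, q2⟩ hq
  simp only [mem_setOf_eq] at hq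
  -- S ∩ Icc null, inside U
  obtain ⟨M, hM1, hM2, hM3⟩ := exists_measurable_superset_of_null
    (measure_mono_null inter_subset_left h0)
  set M' : Set ℝ := M ∩ Icc (q1 : ℝ) (q2 : ℝ) with hM'
  have hM'm : MeasurableSet M' := hM2.inter measurableSet_Icc
  have hM'U : M' ⊆ U := fun z hz => hq hz.2
  have him : volume (φ '' M') = 0 := by
    refine le_antisymm ?_ zero_le
    calc volume (φ '' M')
        ≤ ∫⁻ x in M', ENNReal.ofReal |((1 : ℝ →L[ℝ] ℝ).smulRight (φ' x)).det| ∂volume := by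
          refine MeasureTheory.addHaar_image_le_lintegral_abs_det_fderiv volume hM'm ?_
          exact fun x hx => ((h.deriv x (hM'U hx)).hasFDerivAt.hasFDerivWithinAt)
      _ = 0 := by
          rw [MeasureTheory.Measure.restrict_eq_zero.2
            (measure_mono_null inter_subset_left hM3)]
          simp
  refine measure_mono_null ?_ him
  exact image_mono (f := φ) (fun z hz => ⟨hM1 ⟨hz.1, hz.2⟩, hz.2⟩)


variable {E : Type*} [NormedAddCommGroup E] [NormedSpace ℝ E]

theorem integrableOn_iff {a b : ℝ} (ha : a ∈ U) (hb : b ∈ U) (hab : a ≤ b) (g : ℝ → E) :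
    IntegrableOn g (Icc (φ a) (φ b)) ↔
      IntegrableOn (fun t => φ' t • g (φ t)) (Icc a b) := by
  rw [← h.imageIcc ha hb hab,
    MeasureTheory.integrableOn_image_iff_integrableOn_abs_deriv_smul measurableSet_Icc
      (h.derivWithin (h.subIcc ha hb)) (h.inj.mono (h.subIcc ha hb)) g]
  refine integrableOn_congr_fun (fun t ht => ?_) measurableSet_Icc
  rw [abs_of_pos (h.pos t (h.subIcc ha hb ht))]

theorem integral_Icc {a b : ℝ} (ha : a ∈ U) (hb : b ∈ U) (hab : a ≤ b) (g : ℝ → E) :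
    ∫ r in Icc (φ a) (φ b), g r = ∫ t in Icc a b, φ' t • g (φ t) := by
  rw [← h.imageIcc ha hb hab,
    MeasureTheory.integral_image_eq_integral_abs_deriv_smul measurableSet_Icc
      (h.derivWithin (h.subIcc ha hb)) (h.inj.mono (h.subIcc ha hb)) g]
  refine setIntegral_congr_fun measurableSet_Icc (fun t ht => ?_)
  rw [abs_of_pos (h.pos t (h.subIcc ha hb ht))]

theorem intervalIntegral_eq {a b : ℝ} (ha : a ∈ U) (hb : b ∈ U) (g : ℝ → E) :
    ∫ t in a..b, φ' t • g (φ t) = ∫ r in φ a..φ b, g r := by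
  rcases le_total a b with hab | hab
  · rw [intervalIntegral.integral_of_le hab,
      intervalIntegral.integral_of_le (h.mono.monotoneOn ha hb hab),
      ← integral_Icc_eq_integral_Ioc, ← integral_Icc_eq_integral_Ioc,
      h.integral_Icc ha hb hab]
  · rw [intervalIntegral.integral_symm, intervalIntegral.integral_symm (φ b) (φ a),
      intervalIntegral.integral_of_le hab,
      intervalIntegral.integral_of_le (h.mono.monotoneOn hb ha hab),
      ← integral_Icc_eq_integral_Ioc, ← integral_Icc_eq_integral_Ioc,
      h.integral_Icc hb ha hab]


theorem memLp2 {a b : ℝ} (ha : a ∈ U) (hb : b ∈ U) (hab : a ≤ b) (g : ℝ → E)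
    (hg : MemLp g 2 (volume.restrict (Icc (φ a) (φ b)))) :
    MemLp (fun t => g (φ t)) 2 (volume.restrict (Icc a b)) ∧
      MemLp (fun t => φ' t • g (φ t)) 2 (volume.restrict (Icc a b)) := by
  have hK : MeasurableSet (Icc a b) := measurableSet_Icc
  have hsub := h.subIcc ha hb
  haveI : IsFiniteMeasure (volume.restrict (Icc (φ a) (φ b))) :=
    ⟨by rw [MeasureTheory.Measure.restrict_apply_univ]; exact measure_Icc_lt_top⟩
  have hgi : IntegrableOn g (Icc (φ a) (φ b)) := hg.integrable one_le_two
  have hgi2 : IntegrableOn (fun t => φ' t • g (φ t)) (Icc a b) :=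
    (h.integrableOn_iff ha hb hab g).1 hgi
  have aesm2 : AEStronglyMeasurable (fun t => φ' t • g (φ t))
      (volume.restrict (Icc a b)) := hgi2.aestronglyMeasurable
  have aesm1 : AEStronglyMeasurable (fun t => g (φ t)) (volume.restrict (Icc a b)) := by
    have hc : ContinuousOn (fun t => (φ' t)⁻¹) (Icc a b) :=
      (h.cont'.mono hsub).inv₀ (fun t ht => ne_of_gt (h.pos t (hsub ht)))
    have h1 : AEStronglyMeasurable (fun t => (φ' t)⁻¹ • (φ' t • g (φ t)))
        (volume.restrict (Icc a b)) :=
      (hc.aestronglyMeasurable hK).smul aesm2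
    refine h1.congr ?_
    filter_upwards [self_mem_ae_restrict hK] with t ht
    rw [inv_smul_smul₀ (ne_of_gt (h.pos t (hsub ht)))]
  have hsq : Integrable (fun r => ‖g r‖ ^ 2) (volume.restrict (Icc (φ a) (φ b))) :=
    (memLp_two_iff_integrable_sq_norm hg.1).1 hg
  have hsq' : IntegrableOn (fun t => φ' t • ‖g (φ t)‖ ^ 2) (Icc a b) :=
    (h.integrableOn_iff ha hb hab (fun r => ‖g r‖ ^ 2)).1 hsq
  obtain ⟨tm, htm, hmin⟩ := isCompact_Icc.exists_isMinOn (nonempty_Icc.2 hab)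
    (h.cont'.mono hsub)
  have hc0 : 0 < φ' tm := h.pos tm (hsub htm)
  obtain ⟨M, hM⟩ := isCompact_Icc.exists_bound_of_continuousOn (h.cont'.mono hsub)
  constructor
  · rw [memLp_two_iff_integrable_sq_norm aesm1]
    refine Integrable.mono' (hsq'.const_mul (φ' tm)⁻¹) (aesm1.norm.pow 2) ?_
    filter_upwards [self_mem_ae_restrict hK] with t ht
    have h1 : φ' tm ≤ φ' t := hmin ht
    have h2 : (0:ℝ) ≤ ‖g (φ t)‖ ^ 2 := by positivity
    rw [Real.norm_eq_abs, abs_of_nonneg h2, smul_eq_mul]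
    rw [← sub_nonneg]
    have : (φ' tm)⁻¹ * (φ' t * ‖g (φ t)‖ ^ 2) - ‖g (φ t)‖ ^ 2
        = ((φ' tm)⁻¹ * (φ' t - φ' tm)) * ‖g (φ t)‖ ^ 2 := by
      field_simp
    rw [this]
    exact mul_nonneg (mul_nonneg (inv_nonneg.2 hc0.le) (sub_nonneg.2 h1)) h2
  · rw [memLp_two_iff_integrable_sq_norm aesm2]
    refine Integrable.mono' (hsq'.const_mul M) (aesm2.norm.pow 2) ?_
    filter_upwards [self_mem_ae_restrict hK] with t ht
    have h1 : |φ' t| ≤ M := by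
      have := hM t ht; rwa [Real.norm_eq_abs] at this
    have h3 : 0 < φ' t := h.pos t (hsub ht)
    have h2 : (0:ℝ) ≤ ‖g (φ t)‖ ^ 2 := by positivity
    rw [Real.norm_eq_abs, abs_of_nonneg (by positivity), norm_smul, Real.norm_eq_abs,
      smul_eq_mul, mul_pow]
    rw [abs_of_pos h3] at h1 ⊢
    nlinarith [mul_nonneg (mul_nonneg h3.le h2) (sub_nonneg.2 h1)]


theorem symm (hV : IsOpen V) :
    NiceChart V U (Function.invFunOn φ U) (fun r => (φ' (Function.invFunOn φ U r))⁻¹) ∧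
      (∀ t ∈ U, Function.invFunOn φ U (φ t) = t) ∧
      (∀ r ∈ V, φ (Function.invFunOn φ U r) = r) := by
  set ψ := Function.invFunOn φ U with hψdef
  have hexists : ∀ r ∈ V, ∃ t ∈ U, φ t = r := by
    intro r hr; rw [← h.img] at hr; exact hr.imp (fun t ht => ⟨ht.1, ht.2⟩)
  have hright : ∀ r ∈ V, φ (ψ r) = r := fun r hr => Function.invFunOn_eq (hexists r hr)
  have hmem : ∀ r ∈ V, ψ r ∈ U := fun r hr => Function.invFunOn_mem (hexists r hr)
  have hleft : ∀ t ∈ U, ψ (φ t) = t := fun t ht => h.inj.leftInvOn_invFunOn ht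
  have himg : ψ '' V = U := by
    apply Subset.antisymm
    · rintro - ⟨r, hr, rfl⟩; exact hmem r hr
    · intro t ht; exact ⟨φ t, h.memV ht, hleft t ht⟩
  have hmono : StrictMonoOn ψ V := by
    intro r1 h1 r2 h2 h12
    rcases lt_trichotomy (ψ r1) (ψ r2) with hlt | heq | hgt
    · exact hlt
    · exact absurd (by rw [← hright r1 h1, ← hright r2 h2, heq]) (ne_of_lt h12)
    · have := h.mono (hmem r2 h2) (hmem r1 h1) hgt
      rw [hright r1 h1, hright r2 h2] at this
      exact absurd h12 (not_lt_of_gt this)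
  have hcont : ∀ r ∈ V, ContinuousAt ψ r := by
    intro r hr
    refine hmono.continuousAt_of_image_mem_nhds (hV.mem_nhds hr) ?_
    rw [himg]
    exact h.opn.mem_nhds (hmem r hr)
  have hd : ∀ r ∈ V, HasDerivAt ψ ((φ' (ψ r))⁻¹) r := by
    intro r hr
    refine HasDerivAt.of_local_left_inverse (hcont r hr) (h.deriv _ (hmem r hr))
      (ne_of_gt (h.pos _ (hmem r hr))) ?_
    exact Filter.eventually_of_mem (hV.mem_nhds hr) hright
  have hconn : V.OrdConnected := by
    rw [← h.img]
    exact (IsPreconnected.image h.conn.isPreconnected φ h.contOn).ordConnected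
  refine ⟨⟨hV, hconn, hd, ?_, fun r hr => inv_pos.2 (h.pos _ (hmem r hr)), himg⟩,
    hleft, hright⟩
  have hψcont : ContinuousOn ψ V := fun r hr => (hcont r hr).continuousWithinAt
  exact (h.cont'.comp hψcont hmem).inv₀ fun r hr => ne_of_gt (h.pos _ (hmem r hr))

end NiceChart



theorem locLp_of_le {E : Type*} [NormedAddCommGroup E] {S : Set ℝ} {p : ℝ≥0∞} {f : ℝ → E}
    (hf : ∀ a ∈ S, ∀ b ∈ S, a ≤ b → MemLp f p (volume.restrict (Icc a b))) :
    LocLp S p f := by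
  intro a ha b hb
  rcases le_total a b with hab | hab
  · exact hf a ha b hb hab
  · exact (hf b hb a ha hab).mono_measure
      (MeasureTheory.Measure.restrict_mono (Icc_subset_Icc hab hab) le_rfl)

/-- **Time reparametrization.** Let `𝕋̂` be another open interval and `θ ∈ C¹(𝕋̂, 𝕋)` a
diffeomorphism with `θ̇ > 0` pointwise; define `Â = θ̇·(A∘θ)`, `B̂ = θ̇·(B∘θ)`,
`Ĉ = θ̇·(C∘θ)`, `D̂ = θ̇·(D∘θ)`. Then `(x,u,y)` solves the original system on `𝕋` iff
`(x∘θ, u∘θ, θ̇·(y∘θ))` solves the transformed system on `𝕋̂`; moreover the supply is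
invariant under the time transformation. -/
theorem time_reparametrization
    (T Th : Set ℝ) (hTopen : IsOpen T) (hTconn : T.OrdConnected)
    (hThopen : IsOpen Th) (hThconn : Th.OrdConnected)
    (A : ℝ → Matrix (Fin n) (Fin n) ℂ) (B : ℝ → Matrix (Fin n) (Fin m) ℂ)
    (C : ℝ → Matrix (Fin m) (Fin n) ℂ) (D : ℝ → Matrix (Fin m) (Fin m) ℂ)
    (hLTV : IsLTV T A B C D)
    (θ θ' : ℝ → ℝ)
    (hθdiff : ∀ t ∈ Th, HasDerivAt θ (θ' t) t)
    (hθ'cont : ContinuousOn θ' Th)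
    (hθ'pos : ∀ t ∈ Th, 0 < θ' t)
    (hθsurj : θ '' Th = T) :
    (∀ (x : ℝ → Fin n → ℂ) (u y : ℝ → Fin m → ℂ),
      IsSolution T A B C D x u y ↔
        IsSolution Th (fun t => θ' t • A (θ t)) (fun t => θ' t • B (θ t))
          (fun t => θ' t • C (θ t)) (fun t => θ' t • D (θ t))
          (fun t => x (θ t)) (fun t => u (θ t)) (fun t => θ' t • y (θ t))) ∧
    (∀ (x : ℝ → Fin n → ℂ) (u y : ℝ → Fin m → ℂ), IsSolution T A B C D x u y →
      ∀ th₀ ∈ Th, ∀ th₁ ∈ Th, th₀ ≤ th₁ →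
        θ th₀ ≤ θ th₁ ∧
        (∫ t in th₀..th₁, (star (θ' t • y (θ t)) ⬝ᵥ u (θ t)).re) =
          ∫ t in (θ th₀)..(θ th₁), (star (y t) ⬝ᵥ u t).re) := by

  have hθc : NiceChart Th T θ θ' := ⟨hThopen, hThconn, hθdiff, hθ'cont, hθ'pos, hθsurj⟩
  obtain ⟨hψc, hleft, hright⟩ := hθc.symm hTopen
  set ψ : ℝ → ℝ := Function.invFunOn θ Th with hψdef
  have hψmem : ∀ r ∈ T, ψ r ∈ Th := fun r hr => hψc.memV hr
  have hθmem : ∀ t ∈ Th, θ t ∈ T := fun t ht => hθc.memV ht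
  have hψmono : ∀ a ∈ T, ∀ b ∈ T, a ≤ b → ψ a ≤ ψ b :=
    fun a ha b hb hab => hψc.mono.monotoneOn ha hb hab
  constructor
  · intro x u y
    have hFeq : ∀ r : ℝ, (θ' r • A (θ r)) *ᵥ x (θ r) + (θ' r • B (θ r)) *ᵥ u (θ r)
        = θ' r • (A (θ r) *ᵥ x (θ r) + B (θ r) *ᵥ u (θ r)) := by
      intro r; rw [smul_mulVec, smul_mulVec, smul_add]
    have hGeq : ∀ r : ℝ, (θ' r • C (θ r)) *ᵥ x (θ r) + (θ' r • D (θ r)) *ᵥ u (θ r)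
        = θ' r • (C (θ r) *ᵥ x (θ r) + D (θ r) *ᵥ u (θ r)) := by
      intro r; rw [smul_mulVec, smul_mulVec, smul_add]
    constructor
    · rintro ⟨hu, hy, hint, hode, hout⟩
      refine ⟨?_, ?_, ?_, ?_, ?_⟩
      · exact locLp_of_le fun a ha b hb hab =>
          (hθc.memLp2 ha hb hab u (hu _ (hθmem a ha) _ (hθmem b hb))).1
      · exact locLp_of_le fun a ha b hb hab =>
          (hθc.memLp2 ha hb hab y (hy _ (hθmem a ha) _ (hθmem b hb))).2
      · have key : ∀ a ∈ Th, ∀ b ∈ Th, a ≤ b → IntegrableOn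
            (fun r => (θ' r • A (θ r)) *ᵥ x (θ r) + (θ' r • B (θ r)) *ᵥ u (θ r))
            (Icc a b) := by
          intro a ha b hb hab
          have := (hθc.integrableOn_iff ha hb hab
            (fun r => A r *ᵥ x r + B r *ᵥ u r)).1 (hint _ (hθmem a ha) _ (hθmem b hb))
          exact this.congr_fun (fun r _ => (hFeq r).symm) measurableSet_Icc
        intro a ha b hb
        rcases le_total a b with hab | hab
        · exact key a ha b hb hab
        · exact (key b hb a ha hab).mono_set (Icc_subset_Icc hab hab)
      · intro s hs t ht
        simp only [hFeq]
        rw [hθc.intervalIntegral_eq hs ht (fun r => A r *ᵥ x r + B r *ᵥ u r)]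
        exact hode _ (hθmem s hs) _ (hθmem t ht)
      · rw [ae_iff] at hout ⊢
        have hNT : {r | ¬ (r ∈ T → y r = C r *ᵥ x r + D r *ᵥ u r)} ⊆ T := by
          intro r hr
          by_contra hc
          exact hr fun h' => absurd h' hc
        refine measure_mono_null ?_ (hψc.null_image hNT hout)
        intro t ht
        simp only [mem_setOf_eq, Classical.not_imp] at ht
        obtain ⟨htTh, hne⟩ := ht
        refine ⟨θ t, ?_, hleft t htTh⟩
        simp only [mem_setOf_eq, Classical.not_imp]
        refine ⟨hθmem t htTh, fun heq => hne ?_⟩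
        rw [hGeq, heq]
    · rintro ⟨hu, hy, hint, hode, hout⟩
      have hint' : ∀ a ∈ T, ∀ b ∈ T, a ≤ b →
          IntegrableOn (fun r => A r *ᵥ x r + B r *ᵥ u r) (Icc a b) := by
        intro a ha b hb hab
        have h2 := (hint _ (hψmem a ha) _ (hψmem b hb)).congr_fun
          (fun r _ => hFeq r) measurableSet_Icc
        have h3 := (hθc.integrableOn_iff (hψmem a ha) (hψmem b hb)
          (hψmono a ha b hb hab) (fun r => A r *ᵥ x r + B r *ᵥ u r)).2 h2
        rwa [hright a ha, hright b hb] at h3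
      refine ⟨?_, ?_, ?_, ?_, ?_⟩
      · refine locLp_of_le fun a ha b hb hab => ?_
        have h1 := (hψc.memLp2 ha hb hab (fun r => u (θ r))
          (hu _ (hψmem a ha) _ (hψmem b hb))).1
        refine h1.ae_eq ?_
        filter_upwards [self_mem_ae_restrict (measurableSet_Icc (a := a) (b := b))] with t ht
        rw [hright t (hTconn.out ha hb ht)]
      · refine locLp_of_le fun a ha b hb hab => ?_
        have h1 := (hψc.memLp2 ha hb hab (fun t => θ' t • y (θ t))
          (hy _ (hψmem a ha) _ (hψmem b hb))).2
        refine h1.ae_eq ?_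
        filter_upwards [self_mem_ae_restrict (measurableSet_Icc (a := a) (b := b))] with t ht
        have htT : t ∈ T := hTconn.out ha hb ht
        rw [inv_smul_smul₀ (ne_of_gt (hθ'pos _ (hψmem t htT))), hright t htT]
      · intro a ha b hb
        rcases le_total a b with hab | hab
        · exact hint' a ha b hb hab
        · exact (hint' b hb a ha hab).mono_set (Icc_subset_Icc hab hab)
      · intro s hs t ht
        have h1 := hode _ (hψmem s hs) _ (hψmem t ht)
        simp only [hFeq] at h1
        rw [hθc.intervalIntegral_eq (hψmem s hs) (hψmem t ht)
          (fun r => A r *ᵥ x r + B r *ᵥ u r), hright s hs, hright t ht] at h1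
        exact h1
      · rw [ae_iff] at hout ⊢
        have hSTh : {t | ¬ (t ∈ Th → θ' t • y (θ t) = (θ' t • C (θ t)) *ᵥ x (θ t) +
            (θ' t • D (θ t)) *ᵥ u (θ t))} ⊆ Th := by
          intro t ht
          by_contra hc
          exact ht fun h' => absurd h' hc
        refine measure_mono_null ?_ (hθc.null_image hSTh hout)
        intro r hr
        simp only [mem_setOf_eq, Classical.not_imp] at hr
        obtain ⟨hrT, hne⟩ := hr
        refine ⟨ψ r, ?_, hright r hrT⟩
        simp only [mem_setOf_eq, Classical.not_imp]
        refine ⟨hψmem r hrT, fun heq => hne ?_⟩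
        have h2 : θ' (ψ r) • y (θ (ψ r)) = θ' (ψ r) • (C (θ (ψ r)) *ᵥ x (θ (ψ r)) +
            D (θ (ψ r)) *ᵥ u (θ (ψ r))) := by rw [heq]; exact hGeq _
        have h3 := smul_right_injective (Fin m → ℂ)
          (ne_of_gt (hθ'pos _ (hψmem r hrT))) h2
        rwa [hright r hrT] at h3
  · intro x u y _ th₀ h0 th₁ h1 h01
    refine ⟨hθc.mono.monotoneOn h0 h1 h01, ?_⟩
    have hg : ∀ t : ℝ, (star (θ' t • y (θ t)) ⬝ᵥ u (θ t)).re
        = θ' t • (star (y (θ t)) ⬝ᵥ u (θ t)).re := by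
      intro t
      rw [star_smul, star_trivial, smul_dotProduct, Complex.smul_re]
    simp only [hg]
    exact hθc.intervalIntegral_eq h0 h1 (fun r => (star (y r) ⬝ᵥ u r).re)
end
end

section
/- Monotonicity of the available storage along trajectories starting at rest: let t₋₁ ≤ t₀ ≤ t₁ in 𝕋 and let (x,u,y) be a state-input-output solution of the LTV system with x(t₋₁) = 0. Then V_a(t₁, x(t₁)) ≤ V_a(t₀, x(t₀)) + ∫_{t₀}^{t₁} Re(y(s)* u(s)) ds; in particular, if V_a(t₀, x(t₀)) is finite, then V_a(t₁, x(t₁)) is finite. -/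
open MeasureTheory Matrix Set
open scoped ENNReal ComplexOrder

noncomputable section

attribute [local instance] Matrix.normedAddCommGroup Matrix.normedSpace

variable {n m : ℕ}

/-- The available storage of the LTV system at time `t₀` and state `x₀`, with values in
`[0, +∞]`. -/
noncomputable def availableStorage (T : Set ℝ)
    (A : ℝ → Matrix (Fin n) (Fin n) ℂ) (B : ℝ → Matrix (Fin n) (Fin m) ℂ)
    (C : ℝ → Matrix (Fin m) (Fin n) ℂ) (D : ℝ → Matrix (Fin m) (Fin m) ℂ)
    (t₀ : ℝ) (x₀ : Fin n → ℂ) : ℝ≥0∞ :=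
  ⨆ (t₁ : ℝ) (_ : t₁ ∈ T) (_ : t₀ ≤ t₁) (x : ℝ → Fin n → ℂ) (u : ℝ → Fin m → ℂ)
      (y : ℝ → Fin m → ℂ) (_ : IsSolution T A B C D x u y) (_ : x t₀ = x₀),
    ENNReal.ofReal (-∫ t in t₀..t₁, (star (y t) ⬝ᵥ u t).re)

lemma ennreal_coe_iSup_le {ι : Sort*} {f : ι → ℝ≥0∞} {z : EReal} (h0 : 0 ≤ z)
    (h : ∀ i, (f i : EReal) ≤ z) : ((⨆ i, f i : ℝ≥0∞) : EReal) ≤ z := by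
  lift z to ℝ≥0∞ using h0
  exact EReal.coe_ennreal_le_coe_ennreal_iff.2
    (iSup_le fun i => EReal.coe_ennreal_le_coe_ennreal_iff.1 (h i))

lemma integrable_dot_re {α : Type*} [MeasurableSpace α] {μ : Measure α}
    {u y : α → Fin m → ℂ} (hu : MemLp u 2 μ) (hy : MemLp y 2 μ) :
    Integrable (fun t => (star (y t) ⬝ᵥ u t).re) μ := by
  have hmeas : AEStronglyMeasurable (fun t => (star (y t) ⬝ᵥ u t).re) μ := by
    apply Complex.continuous_re.comp_aestronglyMeasurable
    have hfun : (fun t => star (y t) ⬝ᵥ u t) = fun t => ∑ i, star (y t i) * u t i := by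
      funext t; simp [dotProduct]
    rw [hfun]
    exact Finset.aestronglyMeasurable_fun_sum _ fun i _ =>
      ((continuous_star.comp (continuous_apply i)).comp_aestronglyMeasurable hy.1).mul
        ((continuous_apply i).comp_aestronglyMeasurable hu.1)
  have hint : Integrable (fun t => (m : ℝ) * (‖y t‖ ^ 2 + ‖u t‖ ^ 2)) μ :=
    (hy.norm.integrable_sq.add hu.norm.integrable_sq).const_mul _
  refine hint.mono' hmeas (ae_of_all _ fun t => ?_)
  calc ‖(star (y t) ⬝ᵥ u t).re‖ ≤ ‖star (y t) ⬝ᵥ u t‖ := by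
        rw [Real.norm_eq_abs]; exact Complex.abs_re_le_norm _
    _ ≤ ∑ i : Fin m, ‖star (y t i) * u t i‖ := by
        simp only [dotProduct, Pi.star_apply]; exact norm_sum_le _ _
    _ ≤ ∑ _i : Fin m, ‖y t‖ * ‖u t‖ := by
        refine Finset.sum_le_sum fun i _ => ?_
        rw [norm_mul, norm_star]
        exact mul_le_mul (norm_le_pi_norm _ i) (norm_le_pi_norm _ i) (norm_nonneg _)
          (norm_nonneg _)
    _ = (m : ℝ) * (‖y t‖ * ‖u t‖) := by simp [Finset.sum_const, mul_comm]
    _ ≤ (m : ℝ) * (‖y t‖ ^ 2 + ‖u t‖ ^ 2) := by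
        have h1 : ‖y t‖ * ‖u t‖ ≤ ‖y t‖ ^ 2 + ‖u t‖ ^ 2 := by
          nlinarith [sq_nonneg (‖y t‖ - ‖u t‖), norm_nonneg (y t), norm_nonneg (u t)]
        exact mul_le_mul_of_nonneg_left h1 (by positivity)

lemma memLp_ite {E : Type*} [NormedAddCommGroup E] {μ : Measure ℝ} {p : ℝ≥0∞} (c : ℝ)
    {f g : ℝ → E} (hf : MemLp f p μ) (hg : MemLp g p μ) :
    MemLp (fun t => if t ≤ c then f t else g t) p μ := by
  have h : (fun t => if t ≤ c then f t else g t) = (Iic c).indicator f + ((Iic c)ᶜ).indicator g := by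
    funext t
    by_cases h : t ≤ c
    · simp [Set.indicator_apply, h, not_lt.2 h]
    · simp [Set.indicator_apply, h, lt_of_not_ge h]
  rw [h]
  exact (hf.indicator measurableSet_Iic).add (hg.indicator measurableSet_Iic.compl)

lemma integrable_ite {E : Type*} [NormedAddCommGroup E] {μ : Measure ℝ} (c : ℝ)
    {f g : ℝ → E} (hf : Integrable f μ) (hg : Integrable g μ) :
    Integrable (fun t => if t ≤ c then f t else g t) μ := by
  have h : (fun t => if t ≤ c then f t else g t) = (Iic c).indicator f + ((Iic c)ᶜ).indicator g := by
    funext t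
    by_cases h : t ≤ c
    · simp [Set.indicator_apply, h, not_lt.2 h]
    · simp [Set.indicator_apply, h, lt_of_not_ge h]
  rw [h]
  exact (hf.indicator measurableSet_Iic).add (hg.indicator measurableSet_Iic.compl)

lemma isSolution_concat (T : Set ℝ)
    (A : ℝ → Matrix (Fin n) (Fin n) ℂ) (B : ℝ → Matrix (Fin n) (Fin m) ℂ)
    (C : ℝ → Matrix (Fin m) (Fin n) ℂ) (D : ℝ → Matrix (Fin m) (Fin m) ℂ)
    {t₁ : ℝ} (ht₁ : t₁ ∈ T)
    {x : ℝ → Fin n → ℂ} {u y : ℝ → Fin m → ℂ} {x' : ℝ → Fin n → ℂ} {u' y' : ℝ → Fin m → ℂ}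
    (hs : IsSolution T A B C D x u y) (hs' : IsSolution T A B C D x' u' y')
    (hm : x t₁ = x' t₁) :
    IsSolution T A B C D (fun t => if t ≤ t₁ then x t else x' t)
      (fun t => if t ≤ t₁ then u t else u' t) (fun t => if t ≤ t₁ then y t else y' t) := by
  obtain ⟨hu, hy, hI, hODE, hout⟩ := hs
  obtain ⟨hu', hy', hI', hODE', hout'⟩ := hs'
  have hFX : ∀ r, (A r *ᵥ (if r ≤ t₁ then x r else x' r) + B r *ᵥ (if r ≤ t₁ then u r else u' r))
      = if r ≤ t₁ then (A r *ᵥ x r + B r *ᵥ u r) else (A r *ᵥ x' r + B r *ᵥ u' r) := by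
    intro r; by_cases h : r ≤ t₁ <;> simp [h]
  have hIX : ∀ a ∈ T, ∀ b ∈ T, IntegrableOn
      (fun r => A r *ᵥ (if r ≤ t₁ then x r else x' r) + B r *ᵥ (if r ≤ t₁ then u r else u' r))
      (Icc a b) := by
    intro a ha b hb
    have : (fun r => A r *ᵥ (if r ≤ t₁ then x r else x' r)
        + B r *ᵥ (if r ≤ t₁ then u r else u' r))
        = fun r => if r ≤ t₁ then (A r *ᵥ x r + B r *ᵥ u r)
          else (A r *ᵥ x' r + B r *ᵥ u' r) := funext hFX
    rw [this]
    exact integrable_ite t₁ (hI a ha b hb) (hI' a ha b hb)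
  have hIcc : ∀ a ∈ T, ∀ b ∈ T, IntervalIntegrable
      (fun r => A r *ᵥ (if r ≤ t₁ then x r else x' r) + B r *ᵥ (if r ≤ t₁ then u r else u' r))
      volume a b := by
    intro a ha b hb
    apply IntegrableOn.intervalIntegrable
    rcases le_total a b with h | h
    · rw [uIcc_of_le h]; exact hIX a ha b hb
    · rw [uIcc_of_ge h]; exact hIX b hb a ha
  refine ⟨fun a ha b hb => memLp_ite t₁ (hu a ha b hb) (hu' a ha b hb),
    fun a ha b hb => memLp_ite t₁ (hy a ha b hb) (hy' a ha b hb), hIX, ?_, ?_⟩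
  · -- the integral equation
    have key1 : ∀ s ∈ T, ∀ t ∈ T, s ≤ t → t ≤ t₁ →
        ((if t ≤ t₁ then x t else x' t) - if s ≤ t₁ then x s else x' s) =
        ∫ r in s..t, (A r *ᵥ (if r ≤ t₁ then x r else x' r)
          + B r *ᵥ (if r ≤ t₁ then u r else u' r)) := by
      intro s hsT t htT hst htt1
      rw [if_pos htt1, if_pos (hst.trans htt1), hODE s hsT t htT]
      apply intervalIntegral.integral_congr
      intro r hr
      rw [uIcc_of_le hst] at hr
      exact ((hFX r).trans (if_pos (hr.2.trans htt1))).symm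
    have hXeq : ∀ r, t₁ ≤ r → (if r ≤ t₁ then x r else x' r) = x' r := by
      intro r hr
      by_cases h : r ≤ t₁
      · have h2 : r = t₁ := le_antisymm h hr
        rw [if_pos h, h2, hm]
      · exact if_neg h
    have key2 : ∀ s ∈ T, ∀ t ∈ T, s ≤ t → t₁ ≤ s →
        ((if t ≤ t₁ then x t else x' t) - if s ≤ t₁ then x s else x' s) =
        ∫ r in s..t, (A r *ᵥ (if r ≤ t₁ then x r else x' r)
          + B r *ᵥ (if r ≤ t₁ then u r else u' r)) := by
      intro s hsT t htT hst ht1s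
      rw [hXeq t (ht1s.trans hst), hXeq s ht1s, hODE' s hsT t htT,
        intervalIntegral.integral_of_le hst, intervalIntegral.integral_of_le hst]
      apply setIntegral_congr_fun measurableSet_Ioc
      intro r hr
      exact ((hFX r).trans (if_neg (not_le.2 (ht1s.trans_lt hr.1)))).symm
    have key : ∀ s ∈ T, ∀ t ∈ T, s ≤ t →
        ((if t ≤ t₁ then x t else x' t) - if s ≤ t₁ then x s else x' s) =
        ∫ r in s..t, (A r *ᵥ (if r ≤ t₁ then x r else x' r)
          + B r *ᵥ (if r ≤ t₁ then u r else u' r)) := by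
      intro s hsT t htT hst
      rcases le_total t t₁ with h | h
      · exact key1 s hsT t htT hst h
      rcases le_total t₁ s with h' | h'
      · exact key2 s hsT t htT hst h'
      · calc ((if t ≤ t₁ then x t else x' t) - if s ≤ t₁ then x s else x' s)
            = ((if t₁ ≤ t₁ then x t₁ else x' t₁) - if s ≤ t₁ then x s else x' s)
              + ((if t ≤ t₁ then x t else x' t) - if t₁ ≤ t₁ then x t₁ else x' t₁) := by abel
          _ = (∫ r in s..t₁, (A r *ᵥ (if r ≤ t₁ then x r else x' r)
                + B r *ᵥ (if r ≤ t₁ then u r else u' r)))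
              + ∫ r in t₁..t, (A r *ᵥ (if r ≤ t₁ then x r else x' r)
                + B r *ᵥ (if r ≤ t₁ then u r else u' r)) := by
              rw [key1 s hsT t₁ ht₁ h' le_rfl, key2 t₁ ht₁ t htT h le_rfl]
          _ = _ := intervalIntegral.integral_add_adjacent_intervals
                (hIcc s hsT t₁ ht₁) (hIcc t₁ ht₁ t htT)
    intro s hsT t htT
    rcases le_total s t with h | h
    · exact key s hsT t htT h
    · calc ((if t ≤ t₁ then x t else x' t) - if s ≤ t₁ then x s else x' s)
          = -(((if s ≤ t₁ then x s else x' s)) - if t ≤ t₁ then x t else x' t) := by abel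
        _ = -(∫ r in t..s, (A r *ᵥ (if r ≤ t₁ then x r else x' r)
              + B r *ᵥ (if r ≤ t₁ then u r else u' r))) := by rw [key t htT s hsT h]
        _ = _ := (intervalIntegral.integral_symm t s).symm
  · filter_upwards [hout, hout'] with t hA hB hT
    by_cases h : t ≤ t₁
    · show (if t ≤ t₁ then y t else y' t) = C t *ᵥ (if t ≤ t₁ then x t else x' t)
        + D t *ᵥ (if t ≤ t₁ then u t else u' t)
      rw [if_pos h, if_pos h, if_pos h]; exact hA hT
    · show (if t ≤ t₁ then y t else y' t) = C t *ᵥ (if t ≤ t₁ then x t else x' t)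
        + D t *ᵥ (if t ≤ t₁ then u t else u' t)
      rw [if_neg h, if_neg h, if_neg h]; exact hB hT

/-- **Monotonicity of the available storage along trajectories starting at rest.**
For `t₋₁ ≤ t₀ ≤ t₁` in `𝕋` and a solution `(x,u,y)` with `x(t₋₁) = 0`,
`V_a(t₁, x(t₁)) ≤ V_a(t₀, x(t₀)) + ∫_{t₀}^{t₁} Re(yᴴu)`; in particular finiteness of the
available storage propagates forward. -/
theorem availableStorage_dissipation
    (T : Set ℝ) (hTopen : IsOpen T) (hTconn : T.OrdConnected)
    (A : ℝ → Matrix (Fin n) (Fin n) ℂ) (B : ℝ → Matrix (Fin n) (Fin m) ℂ)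
    (C : ℝ → Matrix (Fin m) (Fin n) ℂ) (D : ℝ → Matrix (Fin m) (Fin m) ℂ)
    (hLTV : IsLTV T A B C D)
    (tm1 t₀ t₁ : ℝ) (htm1 : tm1 ∈ T) (ht₀ : t₀ ∈ T) (ht₁ : t₁ ∈ T)
    (h₁ : tm1 ≤ t₀) (h₂ : t₀ ≤ t₁)
    (x : ℝ → Fin n → ℂ) (u y : ℝ → Fin m → ℂ)
    (hsol : IsSolution T A B C D x u y) (hx0 : x tm1 = 0) :
    ((availableStorage T A B C D t₁ (x t₁) : EReal) ≤
      (availableStorage T A B C D t₀ (x t₀) : EReal) +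
        ((∫ t in t₀..t₁, (star (y t) ⬝ᵥ u t).re : ℝ) : EReal)) ∧
    (availableStorage T A B C D t₀ (x t₀) ≠ ⊤ →
      availableStorage T A B C D t₁ (x t₁) ≠ ⊤) := by
  obtain ⟨hu2, hy2, hxI, hxODE, hyout⟩ := id hsol
  set c : ℝ := ∫ t in t₀..t₁, (star (y t) ⬝ᵥ u t).re with hc
  set V₀ : ℝ≥0∞ := availableStorage T A B C D t₀ (x t₀) with hV₀
  -- V₀ ≥ ofReal (-c), using the given solution up to time t₁
  have hV0c : ENNReal.ofReal (-c) ≤ V₀ := by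
    rw [hV₀]
    unfold availableStorage
    exact le_iSup_of_le t₁ <| le_iSup_of_le ht₁ <| le_iSup_of_le h₂ <| le_iSup_of_le x <|
      le_iSup_of_le u <| le_iSup_of_le y <| le_iSup_of_le hsol <| le_iSup_of_le rfl le_rfl
  have hRHS0 : (0 : EReal) ≤ (V₀ : EReal) + (c : EReal) := by
    calc (0 : EReal) = ((-c : ℝ) : EReal) + ((c : ℝ) : EReal) := by
          rw [← EReal.coe_add]; norm_num
      _ ≤ (ENNReal.ofReal (-c) : EReal) + (c : EReal) := by
          apply add_le_add_left
          rw [EReal.coe_ennreal_ofReal]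
          exact EReal.coe_le_coe_iff.2 (le_max_left _ _)
      _ ≤ (V₀ : EReal) + (c : EReal) :=
          add_le_add_left (EReal.coe_ennreal_le_coe_ennreal_iff.2 hV0c) _
  have main : ((availableStorage T A B C D t₁ (x t₁) : ℝ≥0∞) : EReal) ≤
      (V₀ : EReal) + (c : EReal) := by
    unfold availableStorage
    refine ennreal_coe_iSup_le hRHS0 fun t₂ => ennreal_coe_iSup_le hRHS0 fun ht₂ =>
      ennreal_coe_iSup_le hRHS0 fun h₁₂ => ennreal_coe_iSup_le hRHS0 fun x' =>
      ennreal_coe_iSup_le hRHS0 fun u' => ennreal_coe_iSup_le hRHS0 fun y' =>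
      ennreal_coe_iSup_le hRHS0 fun hsol' => ennreal_coe_iSup_le hRHS0 fun hx' => ?_
    obtain ⟨hu'2, hy'2, hx'I, hx'ODE, hy'out⟩ := id hsol'
    -- the concatenated solution
    have hcs : IsSolution T A B C D (fun t => if t ≤ t₁ then x t else x' t)
        (fun t => if t ≤ t₁ then u t else u' t) (fun t => if t ≤ t₁ then y t else y' t) :=
      isSolution_concat T A B C D ht₁ hsol hsol' hx'.symm
    have hXt0 : (fun t => if t ≤ t₁ then x t else x' t) t₀ = x t₀ := if_pos h₂
    set a : ℝ := -∫ t in t₀..t₂, (star (if t ≤ t₁ then y t else y' t) ⬝ᵥ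
      (if t ≤ t₁ then u t else u' t)).re with ha
    have hV0a : ENNReal.ofReal a ≤ V₀ := by
      rw [hV₀]
      unfold availableStorage
      exact le_iSup_of_le t₂ <| le_iSup_of_le ht₂ <| le_iSup_of_le (h₂.trans h₁₂) <|
        le_iSup_of_le (fun t => if t ≤ t₁ then x t else x' t) <|
        le_iSup_of_le (fun t => if t ≤ t₁ then u t else u' t) <|
        le_iSup_of_le (fun t => if t ≤ t₁ then y t else y' t) <|
        le_iSup_of_le hcs <| le_iSup_of_le hXt0 le_rfl
    -- interval integrability of the concatenated dissipation integrand
    have hfite : (fun t => (star (if t ≤ t₁ then y t else y' t) ⬝ᵥ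
        (if t ≤ t₁ then u t else u' t)).re)
        = fun t => if t ≤ t₁ then (star (y t) ⬝ᵥ u t).re else (star (y' t) ⬝ᵥ u' t).re := by
      funext t; by_cases h : t ≤ t₁ <;> simp [h]
    have hIf : ∀ p ∈ T, ∀ q ∈ T, IntervalIntegrable
        (fun t => (star (if t ≤ t₁ then y t else y' t) ⬝ᵥ (if t ≤ t₁ then u t else u' t)).re)
        volume p q := by
      intro p hp q hq
      apply IntegrableOn.intervalIntegrable
      have key : ∀ p' ∈ T, ∀ q' ∈ T, IntegrableOn
          (fun t => (star (if t ≤ t₁ then y t else y' t) ⬝ᵥ (if t ≤ t₁ then u t else u' t)).re)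
          (Icc p' q') := by
        intro p' hp' q' hq'
        rw [hfite]
        exact integrable_ite t₁ (integrable_dot_re (hu2 p' hp' q' hq') (hy2 p' hp' q' hq'))
          (integrable_dot_re (hu'2 p' hp' q' hq') (hy'2 p' hp' q' hq'))
      rcases le_total p q with h | h
      · rw [uIcc_of_le h]; exact key p hp q hq
      · rw [uIcc_of_ge h]; exact key q hq p hp
    -- split the integral
    have hsplit : (∫ t in t₀..t₂, (star (if t ≤ t₁ then y t else y' t) ⬝ᵥ
        (if t ≤ t₁ then u t else u' t)).re)
        = c + ∫ t in t₁..t₂, (star (y' t) ⬝ᵥ u' t).re := by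
      have hadj := intervalIntegral.integral_add_adjacent_intervals
        (hIf t₀ ht₀ t₁ ht₁) (hIf t₁ ht₁ t₂ ht₂)
      rw [← hadj]
      congr 1
      · apply intervalIntegral.integral_congr
        intro r hr
        rw [uIcc_of_le h₂] at hr
        simp only [if_pos hr.2]
      · rw [intervalIntegral.integral_of_le h₁₂, intervalIntegral.integral_of_le h₁₂]
        apply setIntegral_congr_fun measurableSet_Ioc
        intro r hr
        simp only [if_neg (not_le.2 hr.1)]
    have hac : -∫ t in t₁..t₂, (star (y' t) ⬝ᵥ u' t).re = a + c := by
      rw [ha, hsplit]; ring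
    rw [hac, EReal.coe_ennreal_ofReal]
    rcases le_total (a + c) 0 with hle | hle
    · rw [max_eq_right hle]
      simpa using hRHS0
    · rw [max_eq_left hle]
      calc ((a + c : ℝ) : EReal) = ((a : ℝ) : EReal) + ((c : ℝ) : EReal) := EReal.coe_add a c
        _ ≤ (ENNReal.ofReal a : EReal) + (c : EReal) := by
            apply add_le_add_left
            rw [EReal.coe_ennreal_ofReal]
            exact EReal.coe_le_coe_iff.2 (le_max_left _ _)
        _ ≤ (V₀ : EReal) + (c : EReal) :=
            add_le_add_left (EReal.coe_ennreal_le_coe_ennreal_iff.2 hV0a) _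
  refine ⟨main, fun hne hcon => ?_⟩
  rw [hcon, EReal.coe_ennreal_top, top_le_iff] at main
  rw [← ENNReal.coe_toNNReal hne, EReal.coe_nnreal_eq_coe_real, ← EReal.coe_add] at main
  exact EReal.coe_ne_top _ main
end
end

section
/- Nonnegative supply plus complete reachability implies passivity: if the LTV system has nonnegative supply and is completely reachable, then it is passive, i.e. it admits a storage function. -/
open MeasureTheory Matrix Set
open scoped ENNReal ComplexOrder

noncomputable section

attribute [local instance] Matrix.normedAddCommGroup Matrix.normedSpace

variable {n m : ℕ}

/-! ### Auxiliary lemmas -/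

lemma supply_integrable' {μ : Measure ℝ} {u y : ℝ → Fin m → ℂ}
    (hu : MemLp u 2 μ) (hy : MemLp y 2 μ) :
    Integrable (fun t => (star (y t) ⬝ᵥ u t).re) μ := by
  have key : ∀ i : Fin m, Integrable (fun t => (starRingEnd ℂ) (y t i) * u t i) μ := by
    intro i
    have hyi : MemLp (fun t => y t i) 2 μ :=
      (ContinuousLinearMap.proj (R := ℂ) (φ := fun _ : Fin m => ℂ) i).comp_memLp' hy
    have hui : MemLp (fun t => u t i) 2 μ :=
      (ContinuousLinearMap.proj (R := ℂ) (φ := fun _ : Fin m => ℂ) i).comp_memLp' hu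
    have h2 := L2.integrable_inner (𝕜 := ℂ) (hyi.toLp _) (hui.toLp _)
    refine h2.congr ?_
    filter_upwards [hyi.coeFn_toLp, hui.coeFn_toLp] with t h1 h2
    simp [h1, h2, RCLike.inner_apply, mul_comm]
  have h3 : Integrable (fun t => star (y t) ⬝ᵥ u t) μ := by
    have := integrable_finset_sum (μ := μ) Finset.univ (fun i (_ : i ∈ Finset.univ) => key i)
    refine this.congr (Filter.Eventually.of_forall fun t => ?_)
    simp [dotProduct, Complex.star_def]
  exact h3.re

lemma supply_intervalIntegrable {T : Set ℝ} {u y : ℝ → Fin m → ℂ}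
    (hu : LocLp T 2 u) (hy : LocLp T 2 y) {a b : ℝ} (ha : a ∈ T) (hb : b ∈ T) :
    IntervalIntegrable (fun t => (star (y t) ⬝ᵥ u t).re) volume a b := by
  rcases le_total a b with h | h
  · refine IntegrableOn.intervalIntegrable ?_
    rw [uIcc_of_le h]
    exact supply_integrable' (hu a ha b hb) (hy a ha b hb)
  · refine IntegrableOn.intervalIntegrable ?_
    rw [uIcc_of_ge h]
    exact supply_integrable' (hu b hb a ha) (hy b hb a ha)

lemma zero_isSolution (T : Set ℝ) (A : ℝ → Matrix (Fin n) (Fin n) ℂ)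
    (B : ℝ → Matrix (Fin n) (Fin m) ℂ) (C : ℝ → Matrix (Fin m) (Fin n) ℂ)
    (D : ℝ → Matrix (Fin m) (Fin m) ℂ) :
    IsSolution T A B C D (fun _ => 0) (fun _ => 0) (fun _ => 0) := by
  refine ⟨fun a _ b _ => MemLp.zero, fun a _ b _ => MemLp.zero, ?_, ?_, ?_⟩
  · intro a _ b _
    simp only [Matrix.mulVec_zero, add_zero]
    exact integrable_zero _ _ _
  · intro s _ t _
    simp [Matrix.mulVec_zero]
  · filter_upwards with t _
    simp [Matrix.mulVec_zero]

lemma ite_lt_eq_indicator {E : Type*} [AddCommMonoid E] (c : ℝ) (f g : ℝ → E) :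
    (fun t => if t < c then f t else g t) = (Iio c).indicator f + (Ici c).indicator g := by
  funext t
  by_cases h : t < c
  · simp [Set.indicator_apply, h, not_le.mpr h]
  · simp [Set.indicator_apply, h, not_lt.mp h]

lemma glue_isSolution {T : Set ℝ}
    {A : ℝ → Matrix (Fin n) (Fin n) ℂ} {B : ℝ → Matrix (Fin n) (Fin m) ℂ}
    {C : ℝ → Matrix (Fin m) (Fin n) ℂ} {D : ℝ → Matrix (Fin m) (Fin m) ℂ}
    {x₁ : ℝ → Fin n → ℂ} {u₁ y₁ : ℝ → Fin m → ℂ}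
    {x₂ : ℝ → Fin n → ℂ} {u₂ y₂ : ℝ → Fin m → ℂ} {c : ℝ} (hc : c ∈ T)
    (h₁ : IsSolution T A B C D x₁ u₁ y₁) (h₂ : IsSolution T A B C D x₂ u₂ y₂)
    (hx : x₁ c = x₂ c) :
    IsSolution T A B C D (fun t => if t < c then x₁ t else x₂ t)
      (fun t => if t < c then u₁ t else u₂ t) (fun t => if t < c then y₁ t else y₂ t) := by
  obtain ⟨hu₁, hy₁, hInt₁, hode₁, hout₁⟩ := h₁
  obtain ⟨hu₂, hy₂, hInt₂, hode₂, hout₂⟩ := h₂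
  set G : ℝ → Fin n → ℂ := fun r =>
    A r *ᵥ (if r < c then x₁ r else x₂ r) + B r *ᵥ (if r < c then u₁ r else u₂ r) with hG
  have hGeq : G = (Iio c).indicator (fun r => A r *ᵥ x₁ r + B r *ᵥ u₁ r)
      + (Ici c).indicator (fun r => A r *ᵥ x₂ r + B r *ᵥ u₂ r) := by
    funext r
    by_cases h : r < c
    · simp [hG, Set.indicator_apply, h, not_le.mpr h]
    · simp [hG, Set.indicator_apply, h, not_lt.mp h]
  have hInt : ∀ a ∈ T, ∀ b ∈ T, IntegrableOn G (Icc a b) := by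
    intro a ha b hb
    rw [hGeq]
    exact ((hInt₁ a ha b hb).indicator measurableSet_Iio).add
      ((hInt₂ a ha b hb).indicator measurableSet_Ici)
  have hae_ne : ∀ᵐ r : ℝ ∂(volume : Measure ℝ), r ≠ c :=
    compl_mem_ae_iff.mpr (measure_singleton c)
  have key : ∀ t ∈ T, (if t < c then x₁ t else x₂ t) - x₂ c = ∫ r in c..t, G r := by
    intro t ht
    rcases lt_or_ge t c with h | h
    · rw [if_pos h]
      have e2 : ∫ r in c..t, G r = ∫ r in c..t, (A r *ᵥ x₁ r + B r *ᵥ u₁ r) := by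
        apply intervalIntegral.integral_congr_ae
        filter_upwards [hae_ne] with r hr hrmem
        rw [uIoc_of_ge h.le] at hrmem
        have hrc : r < c := lt_of_le_of_ne hrmem.2 hr
        simp [hG, hrc]
      rw [e2, ← hx]
      exact hode₁ c hc t ht
    · rw [if_neg (not_lt.mpr h)]
      have e2 : ∫ r in c..t, G r = ∫ r in c..t, (A r *ᵥ x₂ r + B r *ᵥ u₂ r) := by
        apply intervalIntegral.integral_congr
        intro r hr
        rw [uIcc_of_le h] at hr
        have hrc : ¬ r < c := not_lt.mpr hr.1
        simp [hG, hrc]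
      rw [e2]
      exact hode₂ c hc t ht
  have hII : ∀ a ∈ T, ∀ b ∈ T, IntervalIntegrable G volume a b := by
    intro a ha b hb
    rcases le_total a b with h | h
    · exact IntegrableOn.intervalIntegrable (by rw [uIcc_of_le h]; exact hInt a ha b hb)
    · exact IntegrableOn.intervalIntegrable (by rw [uIcc_of_ge h]; exact hInt b hb a ha)
  refine ⟨?_, ?_, hInt, ?_, ?_⟩
  · intro a ha b hb
    show MemLp (fun t => if t < c then u₁ t else u₂ t) 2 _
    rw [ite_lt_eq_indicator]
    exact ((hu₁ a ha b hb).indicator measurableSet_Iio).add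
      ((hu₂ a ha b hb).indicator measurableSet_Ici)
  · intro a ha b hb
    show MemLp (fun t => if t < c then y₁ t else y₂ t) 2 _
    rw [ite_lt_eq_indicator]
    exact ((hy₁ a ha b hb).indicator measurableSet_Iio).add
      ((hy₂ a ha b hb).indicator measurableSet_Ici)
  · intro s hs t ht
    show (if t < c then x₁ t else x₂ t) - (if s < c then x₁ s else x₂ s) = ∫ r in s..t, G r
    calc (if t < c then x₁ t else x₂ t) - (if s < c then x₁ s else x₂ s)
        = ((if t < c then x₁ t else x₂ t) - x₂ c) - ((if s < c then x₁ s else x₂ s) - x₂ c) := by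
          abel
      _ = (∫ r in c..t, G r) - ∫ r in c..s, G r := by rw [key t ht, key s hs]
      _ = (∫ r in s..c, G r) + ∫ r in c..t, G r := by
          rw [intervalIntegral.integral_symm s c]; abel
      _ = ∫ r in s..t, G r :=
          intervalIntegral.integral_add_adjacent_intervals (hII s hs c hc) (hII c hc t ht)
  · filter_upwards [hout₁, hout₂] with t e1 e2 ht
    show (if t < c then y₁ t else y₂ t)
        = C t *ᵥ (if t < c then x₁ t else x₂ t) + D t *ᵥ (if t < c then u₁ t else u₂ t)
    split_ifs with h
    · exact e1 ht
    · exact e2 ht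

/-- **Nonnegative supply plus complete reachability implies passivity.** If the LTV
system has nonnegative supply and every state is reachable (from rest) at every time,
then the system admits a storage function. -/
theorem nonnegSupply_completelyReachable_implies_passive
    (T : Set ℝ) (hTopen : IsOpen T) (hTconn : T.OrdConnected)
    (A : ℝ → Matrix (Fin n) (Fin n) ℂ) (B : ℝ → Matrix (Fin n) (Fin m) ℂ)
    (C : ℝ → Matrix (Fin m) (Fin n) ℂ) (D : ℝ → Matrix (Fin m) (Fin m) ℂ)
    (hLTV : IsLTV T A B C D)
    (hNN : ∀ t₀ ∈ T, ∀ t₁ ∈ T, t₀ ≤ t₁ →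
      ∀ (x : ℝ → Fin n → ℂ) (u y : ℝ → Fin m → ℂ),
        IsSolution T A B C D x u y → x t₀ = 0 →
          0 ≤ ∫ t in t₀..t₁, (star (y t) ⬝ᵥ u t).re)
    (hreach : ∀ t₀ ∈ T, ∀ x₀ : Fin n → ℂ, ∃ tm1 ∈ T, tm1 ≤ t₀ ∧
      ∃ (x : ℝ → Fin n → ℂ) (u y : ℝ → Fin m → ℂ),
        IsSolution T A B C D x u y ∧ x tm1 = 0 ∧ x t₀ = x₀) :
    ∃ V : ℝ → (Fin n → ℂ) → ℝ, IsStorage T A B C D V := by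
  classical
  set S : ℝ → (Fin n → ℂ) → Set ℝ := fun t₀ x₀ =>
    {r : ℝ | ∃ s, s ∈ T ∧ s ≤ t₀ ∧ ∃ x u y, IsSolution T A B C D x u y ∧ x s = 0 ∧ x t₀ = x₀ ∧
      r = ∫ t in s..t₀, (star (y t) ⬝ᵥ u t).re} with hS
  have hlb : ∀ t₀ ∈ T, ∀ (x₀ : Fin n → ℂ), ∀ r ∈ S t₀ x₀, 0 ≤ r := by
    rintro t₀ ht₀ x₀ r ⟨s, hs, hst, x, u, y, hsol, h0, -, hr⟩
    rw [hr]
    exact hNN s hs t₀ ht₀ hst x u y hsol h0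
  have hbdd : ∀ t₀ ∈ T, ∀ x₀ : Fin n → ℂ, BddBelow (S t₀ x₀) := fun t₀ ht₀ x₀ =>
    ⟨0, fun r hr => hlb t₀ ht₀ x₀ r hr⟩
  refine ⟨fun t₀ x₀ => sInf (S t₀ x₀), ?_, ?_, ?_⟩
  · intro t ht x
    exact Real.sInf_nonneg fun r hr => hlb t ht x r hr
  · intro t ht
    have hmem : (0 : ℝ) ∈ S t 0 := by
      refine ⟨t, ht, le_refl t, (fun _ => 0), (fun _ => 0), (fun _ => 0),
        zero_isSolution T A B C D, rfl, rfl, ?_⟩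
      rw [intervalIntegral.integral_same]
    exact le_antisymm (csInf_le (hbdd t ht 0) hmem)
      (Real.sInf_nonneg fun r hr => hlb t ht 0 r hr)
  · intro x u y hsol t₀ ht₀ t₁ ht₁ hle
    obtain ⟨s₀, hs₀, hs₀le, x', u', y', hsol', h0', hend'⟩ := hreach t₀ ht₀ (x t₀)
    have hne : (S t₀ (x t₀)).Nonempty :=
      ⟨_, s₀, hs₀, hs₀le, x', u', y', hsol', h0', hend', rfl⟩
    rw [sub_le_iff_le_add]
    refine le_trans ?_ (by linarith [le_refl (sInf (S t₀ (x t₀)))] :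
      sInf (S t₀ (x t₀)) + ∫ t in t₀..t₁, (star (y t) ⬝ᵥ u t).re ≤
      (∫ t in t₀..t₁, (star (y t) ⬝ᵥ u t).re) + sInf (S t₀ (x t₀)))
    rw [← sub_le_iff_le_add]
    refine le_csInf hne ?_
    rintro r ⟨s, hs, hst, x', u', y', hsol', h0', hend', hr⟩
    rw [sub_le_iff_le_add]
    -- glue
    have hglue := glue_isSolution ht₀ hsol' hsol (by rw [hend'])
    have hxc_s : (if s < t₀ then x' s else x s) = 0 := by
      rcases eq_or_lt_of_le hst with h | h
      · subst h
        rw [if_neg (lt_irrefl _), ← hend']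
        exact h0'
      · rw [if_pos h]; exact h0'
    have hxc_t₁ : (if t₁ < t₀ then x' t₁ else x t₁) = x t₁ := by
      rw [if_neg (not_lt.mpr hle)]
    have i1 : IntervalIntegrable
        (fun t => (star (if t < t₀ then y' t else y t) ⬝ᵥ (if t < t₀ then u' t else u t)).re)
        volume s t₀ := supply_intervalIntegrable hglue.1 hglue.2.1 hs ht₀
    have i2 : IntervalIntegrable
        (fun t => (star (if t < t₀ then y' t else y t) ⬝ᵥ (if t < t₀ then u' t else u t)).re)
        volume t₀ t₁ := supply_intervalIntegrable hglue.1 hglue.2.1 ht₀ ht₁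
    have hae_ne : ∀ᵐ r : ℝ ∂(volume : Measure ℝ), r ≠ t₀ :=
      compl_mem_ae_iff.mpr (measure_singleton t₀)
    have e1 : (∫ t in s..t₀,
        (star (if t < t₀ then y' t else y t) ⬝ᵥ (if t < t₀ then u' t else u t)).re)
        = ∫ t in s..t₀, (star (y' t) ⬝ᵥ u' t).re := by
      apply intervalIntegral.integral_congr_ae
      filter_upwards [hae_ne] with t htne htmem
      rw [uIoc_of_le hst] at htmem
      have h : t < t₀ := lt_of_le_of_ne htmem.2 htne
      simp [h]
    have e2 : (∫ t in t₀..t₁,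
        (star (if t < t₀ then y' t else y t) ⬝ᵥ (if t < t₀ then u' t else u t)).re)
        = ∫ t in t₀..t₁, (star (y t) ⬝ᵥ u t).re := by
      apply intervalIntegral.integral_congr
      intro t htmem
      rw [uIcc_of_le hle] at htmem
      have h : ¬ t < t₀ := not_lt.mpr htmem.1
      simp [h]
    have hsplit := intervalIntegral.integral_add_adjacent_intervals i1 i2
    have hmem : (∫ t in t₀..t₁, (star (y t) ⬝ᵥ u t).re) + r ∈ S t₁ (x t₁) := by
      refine ⟨s, hs, le_trans hst hle, _, _, _, hglue, hxc_s, hxc_t₁, ?_⟩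
      rw [← hsplit, e1, e2, hr]
      ring
    have := csInf_le (hbdd t₁ ht₁ (x t₁)) hmem
    linarith
end
end
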